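/- arXiv:0811.2546 — 4 statements merged into one kernel-verified Lean document; each statement's English description precedes it below -/
import Mathlib

section
/- Let ρ = ρ(n) ≥ κ·ln n for some constant κ > 0, and let 0 ≤ q_0 < q_1 ≤ 1 be constants. Then, with high probability over φ drawn from Φ^plant(n, ρn), every assignment with exactly q_0·n variables set to 0 satisfies strictly more clauses of φ than any assignment with exactly q_1·n variables set to 0. -/
open Finset Filter
open scoped Classical Topology

/-- An assignment of Boolean values to `n` variables. -/
abbrev Assignment (n : ℕ) := Fin n → Bool

/-- A 3-clause over `n` variables: three distinct variables (an embedding `Fin 3 ↪ Fin n`)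
together with signs for the three literals (`true` = positive literal). -/
abbrev Clause (n : ℕ) := (Fin 3 ↪ Fin n) × (Fin 3 → Bool)

/-- A 3-CNF formula with `m` clauses over `n` variables: a sequence of `m` clauses
(repetitions allowed). -/
abbrev Formula (n m : ℕ) := Fin m → Clause n

/-- The `i`-th literal of clause `c` is satisfied by assignment `u`. -/
def litSat {n : ℕ} (u : Assignment n) (c : Clause n) (i : Fin 3) : Prop :=
  u (c.1 i) = c.2 i

/-- Clause `c` is satisfied by assignment `u`. -/
def clauseSat {n : ℕ} (u : Assignment n) (c : Clause n) : Prop := ∃ i, litSat u c i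

/-- The formula `φ` is satisfied by assignment `u`. -/
def Sat {n m : ℕ} (φ : Formula n m) (u : Assignment n) : Prop := ∀ j, clauseSat u (φ j)

/-- `φ` belongs to the support of the planted distribution `Φ^plant(n, m)`:
every clause contains at least one positive literal, i.e. the all-ones (planted)
assignment satisfies `φ`.  The planted distribution is uniform on such formulas. -/
def Planted {n m : ℕ} (φ : Formula n m) : Prop := ∀ j, ∃ i, (φ j).2 i = true

/-- The number of clauses of `φ` unsatisfied by `u`. -/
noncomputable def numUnsat {n m : ℕ} (φ : Formula n m) (u : Assignment n) : ℕ :=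
  (univ.filter fun j => ¬ clauseSat u (φ j)).card

/-- The number of clauses of `φ` satisfied by `u`. -/
noncomputable def numSat {n m : ℕ} (φ : Formula n m) (u : Assignment n) : ℕ :=
  (univ.filter fun j => clauseSat u (φ j)).card

/-- Flip the value of variable `i` in assignment `u`. -/
def flipVar {n : ℕ} (u : Assignment n) (i : Fin n) : Assignment n :=
  Function.update u i (!u i)

/-- `u` is a local minimum of `φ`: no single-variable flip strictly decreases the
number of unsatisfied clauses. -/
def LocalMinAssn {n m : ℕ} (φ : Formula n m) (u : Assignment n) : Prop :=
  ∀ i, numUnsat φ u ≤ numUnsat φ (flipVar u i)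

/-- `u` is a proper local minimum of `φ`: a local minimum that does not satisfy `φ`. -/
def ProperLocalMin {n m : ℕ} (φ : Formula n m) (u : Assignment n) : Prop :=
  LocalMinAssn φ u ∧ ¬ Sat φ u

/-- The number of variables assigned `0` by `u`. -/
noncomputable def numZeros {n : ℕ} (u : Assignment n) : ℕ :=
  (univ.filter fun i => u i = false).card

/-- The number of variables assigned `1` by `u`. -/
noncomputable def numOnes {n : ℕ} (u : Assignment n) : ℕ :=
  (univ.filter fun i => u i = true).card

/-- Conditional probability `P(E | F)` for the uniform distribution on a finite type. -/
noncomputable def condProb {α : Type*} [Fintype α] (F E : α → Prop) : ℝ :=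
  ((univ.filter fun a => F a ∧ E a).card : ℝ) / ((univ.filter F).card : ℝ)

/-- Probability of the event `E` for a random formula drawn from the (uniform) planted
distribution `Φ^plant(n, m)`. -/
noncomputable def prPlanted (n m : ℕ) (E : Formula n m → Prop) : ℝ :=
  condProb Planted E

/-- Expectation of `f` over a random formula from the planted distribution
`Φ^plant(n, m)`. -/
noncomputable def avgPlanted (n m : ℕ) (f : Formula n m → ℝ) : ℝ :=
  (∑ φ ∈ univ.filter (Planted (n := n) (m := m)), f φ) /
    ((univ.filter (Planted (n := n) (m := m))).card : ℝ)

/-! ### Auxiliary machinery -/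

namespace FZB

variable {n m : ℕ}

/-- The finset of planted clauses. -/
noncomputable def PC (n : ℕ) : Finset (Clause n) :=
  univ.filter fun c => ∃ i, c.2 i = true

lemma filter_planted_eq :
    (univ.filter (Planted (n := n) (m := m))) = Fintype.piFinset (fun _ : Fin m => PC n) := by
  ext φ; simp [Planted, PC, Fintype.mem_piFinset]

lemma card_planted :
    (univ.filter (Planted (n := n) (m := m))).card = (PC n).card ^ m := by
  rw [filter_planted_eq, Fintype.card_piFinset]; simp

lemma card_PC_le : ((PC n).card : ℝ) ≤ 8 * (n : ℝ) ^ 3 := by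
  have h1 : (PC n).card ≤ Fintype.card (Clause n) := by
    simpa using Finset.card_le_univ (PC n)
  have h2 : Fintype.card (Clause n) = n.descFactorial 3 * 8 := by
    rw [Fintype.card_prod, Fintype.card_embedding_eq]
    simp
  have h3 : n.descFactorial 3 ≤ n ^ 3 := Nat.descFactorial_le_pow n 3
  have : (PC n).card ≤ n ^ 3 * 8 := h1.trans (h2 ▸ Nat.mul_le_mul_right 8 h3)
  calc ((PC n).card : ℝ) ≤ ((n ^ 3 * 8 : ℕ) : ℝ) := by exact_mod_cast this
    _ = 8 * (n : ℝ) ^ 3 := by push_cast; ring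

lemma card_PC_pos (hn : 3 ≤ n) : 0 < (PC n).card := by
  have : Nonempty (Fin 3 ↪ Fin n) := by
    refine ⟨⟨fun i => Fin.castLE hn i, ?_⟩⟩
    intro a b hab
    simpa [Fin.ext_iff] using hab
  obtain ⟨e⟩ := this
  refine Finset.card_pos.2 ⟨(e, fun _ => true), ?_⟩
  simp [PC]

/-- The number of planted clauses unsatisfied by `u`. -/
noncomputable def U (u : Assignment n) : ℕ :=
  ((PC n).filter fun c => ¬ clauseSat u c).card

/-- The number of embeddings landing in the true-set of `u`. -/
noncomputable def T (u : Assignment n) : ℕ :=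
  (univ.filter fun e : Fin 3 ↪ Fin n => ∀ i, u (e i) = true).card

lemma not_clauseSat_iff (u : Assignment n) (c : Clause n) :
    ¬ clauseSat u c ↔ ∀ i, c.2 i = !u (c.1 i) := by
  simp only [clauseSat, litSat, not_exists]
  refine forall_congr' fun i => ?_
  cases h : u (c.1 i) <;> cases h2 : c.2 i <;> simp

lemma U_eq_card_embed (u : Assignment n) :
    U u = (univ.filter fun e : Fin 3 ↪ Fin n => ¬ ∀ i, u (e i) = true).card := by
  unfold U
  refine Finset.card_bij' (fun c _ => c.1) (fun e _ => (e, fun i => !u (e i))) ?_ ?_ ?_ ?_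
  · intro c hc
    simp only [Finset.mem_filter, PC, Finset.mem_univ, true_and] at hc ⊢
    obtain ⟨⟨i, hi⟩, hns⟩ := hc
    rw [not_clauseSat_iff] at hns
    push_neg
    refine ⟨i, ?_⟩
    rw [hns i] at hi
    simpa using hi
  · intro e he
    simp only [Finset.mem_filter, Finset.mem_univ, true_and, PC] at he ⊢
    push_neg at he
    obtain ⟨i, hi⟩ := he
    refine ⟨⟨i, by simp [hi]⟩, ?_⟩
    rw [not_clauseSat_iff]
    intro j; rfl
  · intro c hc
    simp only [Finset.mem_filter, PC, Finset.mem_univ, true_and] at hc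
    obtain ⟨_, hns⟩ := hc
    rw [not_clauseSat_iff] at hns
    exact Prod.ext rfl (funext fun i => (hns i).symm)
  · intro e he
    rfl

lemma U_eq (u : Assignment n) :
    (U u : ℝ) = (Fintype.card (Fin 3 ↪ Fin n) : ℝ) - T u := by
  have h := Finset.card_filter_add_card_filter_not
    (s := (univ : Finset (Fin 3 ↪ Fin n))) (p := fun e => ∀ i, u (e i) = true)
  rw [U_eq_card_embed u]
  unfold T
  have : (univ.filter fun e : Fin 3 ↪ Fin n => ∀ i, u (e i) = true).card
      + (univ.filter fun e : Fin 3 ↪ Fin n => ¬ ∀ i, u (e i) = true).card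
      = Fintype.card (Fin 3 ↪ Fin n) := by rw [← Finset.card_univ]; exact h
  push_cast [← this]; ring

lemma T_eq (u : Assignment n) : T u = (numOnes u).descFactorial 3 := by
  have hcard : Fintype.card {x : Fin n // u x = true} = numOnes u := by
    simp [numOnes, Fintype.card_subtype]
  have h1 : Fintype.card (Fin 3 ↪ {x : Fin n // u x = true})
      = (numOnes u).descFactorial 3 := by
    rw [Fintype.card_embedding_eq]
    simp [hcard]
  rw [← h1, ← Finset.card_univ]
  refine Finset.card_bij'
    (fun e he => ⟨fun i => ⟨e i, by
      simp only [Finset.mem_filter] at he; exact he.2 i⟩,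
      fun a b hab => e.injective (congrArg Subtype.val hab)⟩)
    (fun f _ => f.trans (Function.Embedding.subtype _)) ?_ ?_ ?_ ?_
  · intro e he; exact Finset.mem_univ _
  · intro f hf
    simp only [Finset.mem_filter, Finset.mem_univ, true_and]
    intro i
    exact (f i).2
  · intro e he; rfl
  · intro f hf; rfl

lemma numZeros_add_numOnes (u : Assignment n) : numZeros u + numOnes u = n := by
  have h := Finset.card_filter_add_card_filter_not
    (s := (univ : Finset (Fin n))) (p := fun i => u i = false)
  have h2 : (univ.filter fun i : Fin n => ¬ u i = false)
      = (univ.filter fun i : Fin n => u i = true) := by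
    apply Finset.filter_congr; intro i _; simp
  rw [h2] at h
  unfold numZeros numOnes
  rw [h, Finset.card_univ, Fintype.card_fin]

/-- The per-clause centered comparison variable. -/
noncomputable def X (u v : Assignment n) (c : Clause n) : ℝ :=
  (if clauseSat v c then 1 else 0) - (if clauseSat u c then 1 else 0)

lemma exp_quad {x : ℝ} (h : |x| ≤ 1) : Real.exp x ≤ 1 + x + x ^ 2 := by
  have h2 := Real.exp_bound h (n := 2) (by norm_num)
  have h3 : ∑ i ∈ Finset.range 2, x ^ i / i.factorial = 1 + x := by
    simp [Finset.sum_range_succ]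
  rw [h3] at h2
  have h4 := (abs_le.1 h2).2
  have h5 : |x| ^ 2 = x ^ 2 := sq_abs x
  rw [h5] at h4
  norm_num [Nat.factorial] at h4
  nlinarith [sq_nonneg x]

lemma abs_X_le (u v : Assignment n) (c : Clause n) : |X u v c| ≤ 1 := by
  unfold X; split_ifs <;> norm_num

lemma exp_tX_le (u v : Assignment n) (c : Clause n) {t : ℝ} (h0 : 0 ≤ t) (h1 : t ≤ 1) :
    Real.exp (t * X u v c) ≤ 1 + t * X u v c + t ^ 2 := by
  have hX := abs_X_le u v c
  have habs : |t * X u v c| ≤ 1 := by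
    rw [abs_mul, abs_of_nonneg h0]
    calc t * |X u v c| ≤ 1 * 1 := by
          exact mul_le_mul h1 hX (abs_nonneg _) zero_le_one
      _ = 1 := by ring
  have := exp_quad habs
  have hX2 : (t * X u v c) ^ 2 ≤ t ^ 2 := by
    have h6 : X u v c ^ 2 ≤ 1 := by nlinarith [abs_le.1 hX]
    nlinarith [sq_nonneg t]
  linarith

lemma sum_X (u v : Assignment n) :
    ∑ c ∈ PC n, X u v c = (U u : ℝ) - (U v : ℝ) := by
  unfold X
  rw [Finset.sum_sub_distrib, Finset.sum_boole, Finset.sum_boole]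
  have h1 := Finset.card_filter_add_card_filter_not
    (s := PC n) (p := fun c => clauseSat v c)
  have h2 := Finset.card_filter_add_card_filter_not
    (s := PC n) (p := fun c => clauseSat u c)
  unfold U
  have h1' : (((PC n).filter fun c => clauseSat v c).card : ℝ)
      + (((PC n).filter fun c => ¬ clauseSat v c).card : ℝ) = ((PC n).card : ℝ) := by
    exact_mod_cast h1
  have h2' : (((PC n).filter fun c => clauseSat u c).card : ℝ)
      + (((PC n).filter fun c => ¬ clauseSat u c).card : ℝ) = ((PC n).card : ℝ) := by
    exact_mod_cast h2
  linarith

lemma sum_exp_le (u v : Assignment n) {t : ℝ} (h0 : 0 ≤ t) (h1 : t ≤ 1) :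
    ∑ c ∈ PC n, Real.exp (t * X u v c)
      ≤ ((PC n).card : ℝ) * (1 + t ^ 2) - t * ((U v : ℝ) - (U u : ℝ)) := by
  calc ∑ c ∈ PC n, Real.exp (t * X u v c)
      ≤ ∑ c ∈ PC n, (1 + t * X u v c + t ^ 2) :=
        Finset.sum_le_sum fun c _ => exp_tX_le u v c h0 h1
    _ = ((PC n).card : ℝ) * (1 + t ^ 2) + t * ∑ c ∈ PC n, X u v c := by
        simp only [Finset.sum_add_distrib, Finset.sum_const, nsmul_eq_mul,
          ← Finset.mul_sum]
        ring
    _ = ((PC n).card : ℝ) * (1 + t ^ 2) - t * ((U v : ℝ) - (U u : ℝ)) := by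
        rw [sum_X]; ring

lemma sum_X_formula (φ : Formula n m) (u v : Assignment n) :
    ∑ j, X u v (φ j) = (numSat φ v : ℝ) - numSat φ u := by
  unfold X numSat
  rw [Finset.sum_sub_distrib, Finset.sum_boole, Finset.sum_boole]

lemma bad_count_le (u v : Assignment n) {t : ℝ} (h0 : 0 ≤ t) (h1 : t ≤ 1) :
    ((((univ.filter (Planted (n := n) (m := m))).filter
        fun φ => numSat φ u ≤ numSat φ v).card : ℝ)
      ≤ (∑ c ∈ PC n, Real.exp (t * X u v c)) ^ m) := by
  set s := (univ.filter (Planted (n := n) (m := m))).filter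
    fun φ => numSat φ u ≤ numSat φ v with hs
  calc (s.card : ℝ) = ∑ _φ ∈ s, (1 : ℝ) := by simp
    _ ≤ ∑ φ ∈ s, Real.exp (t * ∑ j, X u v (φ j)) := by
        refine Finset.sum_le_sum fun φ hφ => ?_
        rw [hs, Finset.mem_filter] at hφ
        have hd : (numSat φ u : ℝ) ≤ (numSat φ v : ℝ) := by exact_mod_cast hφ.2
        rw [sum_X_formula]
        exact Real.one_le_exp (mul_nonneg h0 (by linarith))
    _ ≤ ∑ φ ∈ univ.filter (Planted (n := n) (m := m)),
          Real.exp (t * ∑ j, X u v (φ j)) := by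
        refine Finset.sum_le_sum_of_subset_of_nonneg (Finset.filter_subset _ _)
          fun φ _ _ => (Real.exp_pos _).le
    _ = ∑ φ ∈ Fintype.piFinset (fun _ : Fin m => PC n),
          ∏ j, Real.exp (t * X u v (φ j)) := by
        rw [filter_planted_eq]
        refine Finset.sum_congr rfl fun φ _ => ?_
        rw [Finset.mul_sum, Real.exp_sum]
    _ = ∏ _j : Fin m, ∑ c ∈ PC n, Real.exp (t * X u v c) :=
        (Finset.prod_univ_sum (fun _ : Fin m => PC n)
          (fun _ c => Real.exp (t * X u v c))).symm
    _ = (∑ c ∈ PC n, Real.exp (t * X u v c)) ^ m := by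
        rw [Finset.prod_const]; simp

lemma cube_diff {x y : ℝ} (hy : 0 ≤ y) (hxy : y ≤ x) : (x - y) ^ 3 ≤ x ^ 3 - y ^ 3 := by
  nlinarith [mul_nonneg (mul_nonneg hy (sub_nonneg.2 hxy)) (hy.trans hxy)]

lemma le_descFactorial3 {t : ℕ} (h : 2 ≤ t) :
    ((t : ℝ) - 2) ^ 3 ≤ (t.descFactorial 3 : ℝ) := by
  have h1 : t.descFactorial 3 = (t - 2) * ((t - 1) * t) := by
    simp [Nat.descFactorial_succ, Nat.descFactorial_zero, Nat.descFactorial_one]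
  have h2 : (t.descFactorial 3 : ℝ) = ((t : ℝ) - 2) * (((t : ℝ) - 1) * t) := by
    rw [h1]
    push_cast [h, (by omega : 1 ≤ t)]
    ring
  rw [h2]
  have ht : (2 : ℝ) ≤ t := by exact_mod_cast h
  nlinarith

lemma descFactorial3_le (t : ℕ) : (t.descFactorial 3 : ℝ) ≤ (t : ℝ) ^ 3 := by
  have := Nat.descFactorial_le_pow t 3
  exact_mod_cast this

lemma tendsto_expbound (a : ℝ) (ha : 0 < a) :
    Tendsto (fun n : ℕ => (n : ℝ) * Real.log 4 - a * ((n : ℝ) * Real.log n))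
      atTop atBot := by
  have hneg : Tendsto (fun n : ℕ => -(n : ℝ)) atTop atBot :=
    tendsto_neg_atTop_atBot.comp (tendsto_natCast_atTop_atTop)
  refine tendsto_atBot_mono' atTop ?_ hneg
  have hlog : ∀ᶠ n : ℕ in atTop, (Real.log 4 + 1) / a ≤ Real.log n := by
    have h := Real.tendsto_log_atTop.comp (tendsto_natCast_atTop_atTop (R := ℝ))
    exact h.eventually_ge_atTop _
  filter_upwards [hlog] with n hn
  have h2 : Real.log 4 + 1 ≤ a * Real.log n := by
    rw [div_le_iff₀ ha] at hn
    linarith [mul_comm (Real.log n) a]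
  have h3 : (0 : ℝ) ≤ n := Nat.cast_nonneg n
  nlinarith [mul_le_mul_of_nonneg_left h2 h3]

set_option maxHeartbeats 1000000 in
/-- The main quantitative bound for a fixed `n`. -/
lemma main_bound (q0 q1 : ℝ) (hq0 : 0 ≤ q0) (hq01 : q0 < q1) (hq1 : q1 ≤ 1)
    (n mm : ℕ) (hn3 : 3 ≤ n) (hn4 : 4 ≤ (q1 - q0) * n) :
    1 - (4 : ℝ) ^ n * (1 - (q1 - q0) ^ 6 / 16384) ^ mm ≤
      prPlanted n mm (fun φ => ∀ u v : Assignment n,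
        (numZeros u : ℝ) = q0 * n → (numZeros v : ℝ) = q1 * n →
          numSat φ v < numSat φ u) ∧
    prPlanted n mm (fun φ => ∀ u v : Assignment n,
        (numZeros u : ℝ) = q0 * n → (numZeros v : ℝ) = q1 * n →
          numSat φ v < numSat φ u) ≤ 1 := by
  obtain ⟨ε, hεdef⟩ : ∃ ε : ℝ, ε = q1 - q0 := ⟨_, rfl⟩
  have hε : 0 < ε := by rw [hεdef]; linarith
  have hε1 : ε ≤ 1 := by rw [hεdef]; linarith
  rw [← hεdef] at hn4
  obtain ⟨c, hcdef⟩ : ∃ c : ℝ, c = ε ^ 3 / 64 := ⟨_, rfl⟩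
  have hc0 : 0 < c := by rw [hcdef]; positivity
  have hc1 : c ≤ 1 := by
    have h3 : ε ^ 3 ≤ 1 := pow_le_one₀ hε.le hε1
    rw [hcdef]; linarith
  obtain ⟨t, htdef⟩ : ∃ t : ℝ, t = c / 2 := ⟨_, rfl⟩
  have ht0 : 0 ≤ t := by rw [htdef]; linarith
  have ht1 : t ≤ 1 := by rw [htdef]; linarith
  obtain ⟨γ, hγdef⟩ : ∃ γ : ℝ, γ = ε ^ 6 / 16384 := ⟨_, rfl⟩
  have hγeq : γ = c ^ 2 / 4 := by rw [hγdef, hcdef]; ring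
  have hγ0 : 0 < γ := by rw [hγdef]; positivity
  have hγ1 : γ ≤ 1 := by
    have h6 : ε ^ 6 ≤ 1 := pow_le_one₀ hε.le hε1
    rw [hγdef]; linarith
  rw [hεdef] at hγdef
  rw [← hγdef]
  have hNpos : 0 < (PC n).card := card_PC_pos hn3
  have hn0 : (0 : ℝ) ≤ n := Nat.cast_nonneg n
  -- per-pair bound
  have hpair : ∀ u v : Assignment n, (numZeros u : ℝ) = q0 * n →
      (numZeros v : ℝ) = q1 * n →
      ((((univ.filter (Planted (n := n) (m := mm))).filter
        fun φ => numSat φ u ≤ numSat φ v).card : ℝ)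
        ≤ (((PC n).card : ℝ) * (1 - γ)) ^ mm) := by
    intro u v hu hv
    have hzu := numZeros_add_numOnes u
    have hzv := numZeros_add_numOnes v
    have hou : (numOnes u : ℝ) = (1 - q0) * n := by
      have hh : ((numZeros u : ℝ)) + (numOnes u : ℝ) = n := by exact_mod_cast hzu
      rw [hu] at hh; linarith
    have hov : (numOnes v : ℝ) = (1 - q1) * n := by
      have hh : ((numZeros v : ℝ)) + (numOnes v : ℝ) = n := by exact_mod_cast hzv
      rw [hv] at hh; linarith
    have honu4 : (4 : ℝ) ≤ (numOnes u : ℝ) := by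
      rw [hou]
      calc (4 : ℝ) ≤ ε * n := hn4
        _ ≤ (1 - q0) * n := by
            apply mul_le_mul_of_nonneg_right _ hn0
            rw [hεdef]; linarith
    have h2u : 2 ≤ numOnes u := by
      have : (2 : ℝ) ≤ (numOnes u : ℝ) := by linarith
      exact_mod_cast this
    have hTu : ((1 - q0) * n - 2) ^ 3 ≤ (T u : ℝ) := by
      rw [T_eq, ← hou]
      exact le_descFactorial3 h2u
    have hTv : (T v : ℝ) ≤ ((1 - q1) * n) ^ 3 := by
      rw [T_eq, ← hov]
      exact descFactorial3_le _
    have hyx : (1 - q1) * n ≤ (1 - q0) * n - 2 := by nlinarith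
    have hy0 : (0 : ℝ) ≤ (1 - q1) * n := by
      apply mul_nonneg _ hn0; linarith
    have hD : ε ^ 3 * (n : ℝ) ^ 3 / 8 ≤ (T u : ℝ) - T v := by
      have hcube := cube_diff hy0 hyx
      have hdiff : ((1 - q0) * n - 2) - (1 - q1) * n = ε * n - 2 := by
        rw [hεdef]; ring
      have hp1 : (ε * n / 2) ^ 3 ≤ (ε * n - 2) ^ 3 := by
        apply pow_le_pow_left₀ (by positivity)
        linarith
      calc ε ^ 3 * (n : ℝ) ^ 3 / 8 = (ε * n / 2) ^ 3 := by ring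
        _ ≤ (ε * n - 2) ^ 3 := hp1
        _ = (((1 - q0) * n - 2) - (1 - q1) * n) ^ 3 := by rw [hdiff]
        _ ≤ ((1 - q0) * n - 2) ^ 3 - ((1 - q1) * n) ^ 3 := hcube
        _ ≤ (T u : ℝ) - T v := by linarith
    have hcN : c * ((PC n).card : ℝ) ≤ (T u : ℝ) - T v := by
      have h8 : ((PC n).card : ℝ) ≤ 8 * (n : ℝ) ^ 3 := card_PC_le
      calc c * ((PC n).card : ℝ) ≤ c * (8 * (n : ℝ) ^ 3) :=
            mul_le_mul_of_nonneg_left h8 hc0.le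
        _ = ε ^ 3 * (n : ℝ) ^ 3 / 8 := by rw [hcdef]; ring
        _ ≤ _ := hD
    have hUTdiff : (U v : ℝ) - U u = (T u : ℝ) - T v := by
      rw [U_eq, U_eq]; ring
    have hS : ∑ cc ∈ PC n, Real.exp (t * X u v cc)
        ≤ ((PC n).card : ℝ) * (1 - γ) := by
      have h1 := sum_exp_le u v ht0 ht1
      rw [hUTdiff] at h1
      have h2 : t * (c * ((PC n).card : ℝ)) ≤ t * ((T u : ℝ) - T v) :=
        mul_le_mul_of_nonneg_left hcN ht0
      have hN0 : (0 : ℝ) ≤ ((PC n).card : ℝ) := Nat.cast_nonneg _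
      have h3 : ((PC n).card : ℝ) * (1 + t ^ 2) - t * ((T u : ℝ) - T v)
          ≤ ((PC n).card : ℝ) * (1 - γ) := by
        rw [hγeq, htdef]
        nlinarith [h2]
      linarith
    have hSnn : 0 ≤ ∑ cc ∈ PC n, Real.exp (t * X u v cc) :=
      Finset.sum_nonneg fun _ _ => (Real.exp_pos _).le
    calc ((((univ.filter (Planted (n := n) (m := mm))).filter
        fun φ => numSat φ u ≤ numSat φ v).card : ℝ))
        ≤ (∑ cc ∈ PC n, Real.exp (t * X u v cc)) ^ mm := bad_count_le u v ht0 ht1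
      _ ≤ (((PC n).card : ℝ) * (1 - γ)) ^ mm := pow_le_pow_left₀ hSnn hS mm
  -- union bound
  set Pl := (univ.filter (Planted (n := n) (m := mm))) with hPl
  set Gd : Formula n mm → Prop := fun φ => ∀ u v : Assignment n,
      (numZeros u : ℝ) = q0 * n → (numZeros v : ℝ) = q1 * n →
        numSat φ v < numSat φ u with hGd
  set A := (univ.filter fun u : Assignment n => (numZeros u : ℝ) = q0 * n) with hA
  set B := (univ.filter fun v : Assignment n => (numZeros v : ℝ) = q1 * n) with hB
  have hsub : Pl.filter (fun φ => ¬ Gd φ) ⊆ (A ×ˢ B).biUnion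
      (fun p => Pl.filter fun φ => numSat φ p.1 ≤ numSat φ p.2) := by
    intro φ hφ
    rw [Finset.mem_filter] at hφ
    obtain ⟨hP, hbad⟩ := hφ
    simp only [hGd] at hbad
    push_neg at hbad
    obtain ⟨u, v, hu, hv, hle⟩ := hbad
    rw [Finset.mem_biUnion]
    refine ⟨(u, v), Finset.mem_product.2 ⟨?_, ?_⟩, Finset.mem_filter.2 ⟨hP, hle⟩⟩
    · rw [hA, Finset.mem_filter]; exact ⟨Finset.mem_univ _, hu⟩
    · rw [hB, Finset.mem_filter]; exact ⟨Finset.mem_univ _, hv⟩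
  have hK0 : (0 : ℝ) ≤ (((PC n).card : ℝ) * (1 - γ)) ^ mm := by
    apply pow_nonneg
    apply mul_nonneg (Nat.cast_nonneg _)
    linarith
  have hbadcard : (((Pl.filter fun φ => ¬ Gd φ).card : ℝ))
      ≤ (4 : ℝ) ^ n * (((PC n).card : ℝ) * (1 - γ)) ^ mm := by
    have h1 : (Pl.filter fun φ => ¬ Gd φ).card ≤
        ∑ p ∈ A ×ˢ B, (Pl.filter fun φ => numSat φ p.1 ≤ numSat φ p.2).card :=
      le_trans (Finset.card_le_card hsub) (Finset.card_biUnion_le)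
    have h2 : (∑ p ∈ A ×ˢ B,
          ((Pl.filter fun φ => numSat φ p.1 ≤ numSat φ p.2).card : ℝ))
        ≤ ∑ _p ∈ A ×ˢ B, (((PC n).card : ℝ) * (1 - γ)) ^ mm := by
      refine Finset.sum_le_sum fun p hp => ?_
      rw [Finset.mem_product] at hp
      have hu : (numZeros p.1 : ℝ) = q0 * n := by
        have := hp.1; rw [hA, Finset.mem_filter] at this; exact this.2
      have hv : (numZeros p.2 : ℝ) = q1 * n := by
        have := hp.2; rw [hB, Finset.mem_filter] at this; exact this.2
      exact hpair p.1 p.2 hu hv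
    have h3 : (((A ×ˢ B).card : ℝ)) ≤ (4 : ℝ) ^ n := by
      have hAcard : A.card ≤ 2 ^ n := by
        calc A.card ≤ Fintype.card (Assignment n) := Finset.card_le_univ A
          _ = 2 ^ n := by simp
      have hBcard : B.card ≤ 2 ^ n := by
        calc B.card ≤ Fintype.card (Assignment n) := Finset.card_le_univ B
          _ = 2 ^ n := by simp
      calc (((A ×ˢ B).card : ℝ)) = (A.card : ℝ) * B.card := by
            rw [Finset.card_product]; push_cast; ring
        _ ≤ (2 : ℝ) ^ n * (2 : ℝ) ^ n := by
            apply mul_le_mul _ _ (Nat.cast_nonneg _) (by positivity)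
            · exact_mod_cast hAcard
            · exact_mod_cast hBcard
        _ = 4 ^ n := by rw [← mul_pow]; norm_num
    calc (((Pl.filter fun φ => ¬ Gd φ).card : ℝ))
        ≤ ∑ p ∈ A ×ˢ B,
            ((Pl.filter fun φ => numSat φ p.1 ≤ numSat φ p.2).card : ℝ) := by
          exact_mod_cast h1
      _ ≤ ∑ _p ∈ A ×ˢ B, (((PC n).card : ℝ) * (1 - γ)) ^ mm := h2
      _ = ((A ×ˢ B).card : ℝ) * (((PC n).card : ℝ) * (1 - γ)) ^ mm := by
          rw [Finset.sum_const, nsmul_eq_mul]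
      _ ≤ (4 : ℝ) ^ n * (((PC n).card : ℝ) * (1 - γ)) ^ mm :=
          mul_le_mul_of_nonneg_right h3 hK0
  -- put it together
  have hPlcard : ((Pl.card : ℝ)) = (((PC n).card : ℝ)) ^ mm := by
    rw [hPl, card_planted]; push_cast; ring
  have hPlpos : (0 : ℝ) < (Pl.card : ℝ) := by
    rw [hPlcard]
    exact pow_pos (by exact_mod_cast hNpos) mm
  have hpr : prPlanted n mm Gd = ((Pl.filter Gd).card : ℝ) / (Pl.card : ℝ) := by
    have hset : (univ.filter fun a : Formula n mm => Planted a ∧ Gd a) = Pl.filter Gd := by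
      ext φ
      simp [hPl]
    unfold prPlanted condProb
    rw [Finset.filter_congr_decidable]
    congr 1
    exact_mod_cast congrArg Finset.card hset
  have hsplit : (Pl.filter Gd).card + (Pl.filter fun φ => ¬ Gd φ).card = Pl.card :=
    Finset.card_filter_add_card_filter_not (s := Pl) (p := Gd)
  have hsplit' : ((Pl.filter Gd).card : ℝ)
      = (Pl.card : ℝ) - ((Pl.filter fun φ => ¬ Gd φ).card : ℝ) := by
    have := congrArg (fun k : ℕ => (k : ℝ)) hsplit
    push_cast at this
    linarith
  constructor
  · rw [hpr, hsplit']
    have hfrac : ((Pl.filter fun φ => ¬ Gd φ).card : ℝ) / (Pl.card : ℝ)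
        ≤ (4 : ℝ) ^ n * (1 - γ) ^ mm := by
      rw [div_le_iff₀ hPlpos, hPlcard]
      calc ((Pl.filter fun φ => ¬ Gd φ).card : ℝ)
          ≤ (4 : ℝ) ^ n * (((PC n).card : ℝ) * (1 - γ)) ^ mm := hbadcard
        _ = 4 ^ n * (1 - γ) ^ mm * ((PC n).card : ℝ) ^ mm := by
            rw [mul_pow]; ring
    rw [sub_div, div_self hPlpos.ne']
    linarith
  · rw [hpr]
    rw [div_le_one hPlpos]
    exact_mod_cast Finset.card_le_card (Finset.filter_subset _ _)

end FZB

/-- **Lemma (fewer zeros is better).**  If `ρ = ρ(n) ≥ κ · ln n` for a constant `κ > 0`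
and `0 ≤ q₀ < q₁ ≤ 1` are constants, then whp over `φ ∈ Φ^plant(n, ρn)` every assignment
with exactly `q₀·n` variables set to `0` satisfies strictly more clauses than any
assignment with exactly `q₁·n` variables set to `0`. -/
theorem fewer_zeros_better_whp (κ : ℝ) (hκ : 0 < κ)
    (q0 q1 : ℝ) (hq0 : 0 ≤ q0) (hq01 : q0 < q1) (hq1 : q1 ≤ 1) (m : ℕ → ℕ)
    (hρ : ∀ᶠ n : ℕ in atTop, κ * Real.log n * n ≤ (m n : ℝ)) :
    Tendsto (fun n : ℕ => prPlanted n (m n) fun φ =>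
        ∀ u v : Assignment n, (numZeros u : ℝ) = q0 * n → (numZeros v : ℝ) = q1 * n →
          numSat φ v < numSat φ u)
      atTop (𝓝 1) := by
  have hε : 0 < q1 - q0 := by linarith
  set γ : ℝ := (q1 - q0) ^ 6 / 16384 with hγdef
  have hγ0 : 0 < γ := by positivity
  have hγ1 : γ ≤ 1 := by
    have h6 : (q1 - q0) ^ 6 ≤ 1 := pow_le_one₀ hε.le (by linarith)
    rw [hγdef]; linarith
  -- eventual hypotheses
  have hev3 : ∀ᶠ n : ℕ in atTop, 3 ≤ n := eventually_ge_atTop 3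
  have hev4 : ∀ᶠ n : ℕ in atTop, 4 ≤ (q1 - q0) * n := by
    have h := tendsto_natCast_atTop_atTop (R := ℝ)
    filter_upwards [h.eventually_ge_atTop (4 / (q1 - q0))] with n hn
    rw [div_le_iff₀ hε] at hn
    linarith [mul_comm (q1 - q0) (n : ℝ)]
  -- the error term tends to zero
  have herr : Tendsto (fun n : ℕ => (4 : ℝ) ^ n * (1 - γ) ^ m n) atTop (𝓝 0) := by
    have hbnd : ∀ᶠ n : ℕ in atTop,
        (4 : ℝ) ^ n * (1 - γ) ^ m n
          ≤ Real.exp ((n : ℝ) * Real.log 4 - (γ * κ) * ((n : ℝ) * Real.log n)) := by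
      filter_upwards [hρ] with n hn
      have h1 : (1 - γ) ^ m n ≤ Real.exp (-γ) ^ m n := by
        apply pow_le_pow_left₀ (by linarith)
        linarith [Real.add_one_le_exp (-γ)]
      have h2 : Real.exp (-γ) ^ m n = Real.exp (-(γ * m n)) := by
        rw [← Real.exp_nat_mul]; congr 1; ring
      have h3 : Real.exp (-(γ * m n)) ≤ Real.exp (-(γ * (κ * Real.log n * n))) := by
        apply Real.exp_le_exp.2
        have := mul_le_mul_of_nonneg_left hn hγ0.le
        linarith
      have h4 : (4 : ℝ) ^ n = Real.exp ((n : ℝ) * Real.log 4) := by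
        rw [Real.exp_nat_mul, Real.exp_log (by norm_num)]
      calc (4 : ℝ) ^ n * (1 - γ) ^ m n
          ≤ (4 : ℝ) ^ n * Real.exp (-(γ * (κ * Real.log n * n))) := by
            apply mul_le_mul_of_nonneg_left _ (by positivity)
            calc (1 - γ) ^ m n ≤ Real.exp (-(γ * m n)) := h2 ▸ h1
              _ ≤ _ := h3
        _ = Real.exp ((n : ℝ) * Real.log 4 - (γ * κ) * ((n : ℝ) * Real.log n)) := by
            rw [h4, ← Real.exp_add]
            ring_nf
    have hexp : Tendsto
        (fun n : ℕ => Real.exp ((n : ℝ) * Real.log 4 - (γ * κ) * ((n : ℝ) * Real.log n)))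
        atTop (𝓝 0) :=
      Real.tendsto_exp_atBot.comp (FZB.tendsto_expbound (γ * κ) (by positivity))
    have hnn : ∀ᶠ n : ℕ in atTop, (0 : ℝ) ≤ (4 : ℝ) ^ n * (1 - γ) ^ m n := by
      filter_upwards with n
      apply mul_nonneg (by positivity)
      apply pow_nonneg; linarith
    exact squeeze_zero' hnn hbnd hexp
  -- conclude via squeeze
  have hlow : Tendsto (fun n : ℕ => 1 - (4 : ℝ) ^ n * (1 - γ) ^ m n) atTop (𝓝 1) := by
    have h0 : Tendsto (fun _ : ℕ => (1 : ℝ)) atTop (𝓝 1) := tendsto_const_nhds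
    have h := h0.sub herr
    simpa using h
  refine tendsto_of_tendsto_of_tendsto_of_le_of_le' hlow tendsto_const_nhds ?_ ?_
  · filter_upwards [hev3, hev4] with n h3 h4
    exact (FZB.main_bound q0 q1 hq0 hq01 hq1 n (m n) h3 h4).1
  · filter_upwards [hev3, hev4] with n h3 h4
    exact (FZB.main_bound q0 q1 hq0 hq01 hq1 n (m n) h3 h4).2
end

section
/- Let κ > 7/6 be a constant and ρ = ρ(n) ≥ κ·ln n. Then for any fixed integers d_1, d_2 ≥ 1, with high probability a random formula φ from Φ^plant(n, ρn) contains no two d_1-isolated variables at distance at most d_2 from each other in the primal graph G(φ). -/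
open Finset Filter
open scoped Classical Topology

/-- The primal graph `G(φ)` of the formula `φ` as a simple graph. -/
def primalGraph {n m : ℕ} (φ : Formula n m) : SimpleGraph (Fin n) :=
  SimpleGraph.fromRel fun x y => ∃ (j : Fin m) (i i' : Fin 3), (φ j).1 i = x ∧ (φ j).1 i' = y

/-- The clause `c` has type `(+,-,-)`: exactly one positive literal. -/
def typePNN {n : ℕ} (c : Clause n) : Prop :=
  ∃ i, c.2 i = true ∧ ∀ i', i' ≠ i → c.2 i' = false

/-- Variable `x` occurs positively in clause `c`. -/
def posIn {n : ℕ} (c : Clause n) (x : Fin n) : Prop := ∃ i, c.1 i = x ∧ c.2 i = true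

/-- The number of clauses of type `(+,-,-)` of `φ` in which `x` occurs positively. -/
noncomputable def isolatedDeg {n m : ℕ} (φ : Formula n m) (x : Fin n) : ℕ :=
  (univ.filter fun j => typePNN (φ j) ∧ posIn (φ j) x).card

/-- Variable `x` is `k`-isolated in `φ`: it appears positively in at most `k` clauses
of type `(+,-,-)`. -/
def kIsolated {n m : ℕ} (φ : Formula n m) (k : ℕ) (x : Fin n) : Prop := isolatedDeg φ x ≤ k


/-! ### Auxiliary development -/

section AuxDev

variable {n m : ℕ}

/-- planted clauses -/
noncomputable def PlC (n : ℕ) : Finset (Clause n) :=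
  univ ×ˢ ((univ : Finset (Fin 3 → Bool)).filter fun s => ∃ i, s i = true)

lemma mem_PlC {c : Clause n} : c ∈ PlC n ↔ ∃ i, c.2 i = true := by simp [PlC]

/-- clauses containing both `v` and `w` -/
noncomputable def CSet (n : ℕ) (v w : Fin n) : Finset (Clause n) :=
  univ.filter fun c => (∃ i, c.1 i = v) ∧ (∃ i, c.1 i = w)

/-- clauses of type `(+,-,-)` positive at `x` or `y` -/
noncomputable def ASet (n : ℕ) (x y : Fin n) : Finset (Clause n) :=
  univ.filter fun c => typePNN c ∧ (posIn c x ∨ posIn c y)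

lemma filter_univ_inst {α : Type*} [Fintype α] (p : α → Prop) {D1 : DecidablePred p}
    [D2 : DecidablePred p] : (@Finset.filter _ p D1 univ) = (@Finset.filter _ p D2 univ) := by
  ext a
  rw [@Finset.mem_filter _ _ D1, @Finset.mem_filter _ _ D2]

lemma card_clause_le {S : Finset (Clause n)} (P1 : (Fin 3 → Fin n) → Prop)
    (P2 : (Fin 3 → Bool) → Prop) [D1 : DecidablePred P1] [D2 : DecidablePred P2]
    (h : ∀ c ∈ S, P1 (c.1 : Fin 3 → Fin n) ∧ P2 c.2) :
    S.card ≤ (@Finset.filter _ _ D1 univ).card * (@Finset.filter _ _ D2 univ).card := by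
  rw [← card_product, ← filter_product, univ_product_univ]
  apply card_le_card_of_injOn (fun c : Clause n => ((c.1 : Fin 3 → Fin n), c.2))
  · intro c hc
    simp only [mem_filter, mem_product, mem_univ, true_and] at hc ⊢
    simpa using h c hc
  · intro c1 _ c2 _ h
    obtain ⟨h1, h2⟩ := Prod.mk.injEq .. ▸ h
    exact Prod.ext (Function.Embedding.coe_injective (by exact_mod_cast h1)) h2

lemma card_fun_pinned (a b : Fin 3) (hab : a ≠ b) (v w : Fin n)
    {D : DecidablePred fun f : Fin 3 → Fin n => f a = v ∧ f b = w} :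
    (@Finset.filter _ _ D univ).card = n := by
  have : @Finset.filter _ _ D univ
      = Fintype.piFinset (fun i => if i = a then {v} else if i = b then {w} else univ) := by
    ext f
    simp only [mem_filter, mem_univ, true_and, Fintype.mem_piFinset]
    constructor
    · rintro ⟨h1, h2⟩ i
      by_cases hia : i = a
      · subst hia; simp [h1]
      · by_cases hib : i = b
        · subst hib; simp [hia, h2]
        · simp [hia, hib]
    · intro h
      constructor
      · have := h a; simpa using this
      · have := h b; simpa [Ne.symm hab] using this
  rw [this, Fintype.card_piFinset]
  clear this D
  fin_cases a <;> fin_cases b <;> simp_all <;> simp [Fin.prod_univ_three]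

lemma card_fun_pinned_one (a : Fin 3) (v : Fin n)
    {D : DecidablePred fun f : Fin 3 → Fin n => f a = v} :
    (@Finset.filter _ _ D univ).card = n ^ 2 := by
  have : @Finset.filter _ _ D univ
      = Fintype.piFinset (fun i => if i = a then {v} else univ) := by
    ext f
    simp only [mem_filter, mem_univ, true_and, Fintype.mem_piFinset]
    constructor
    · intro h1 i
      by_cases hia : i = a
      · subst hia; simp [h1]
      · simp [hia]
    · intro h
      have := h a; simpa using this
  rw [this, Fintype.card_piFinset]
  clear this D
  fin_cases a <;> simp [Fin.prod_univ_three] <;> ring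

lemma card_bool_pinned (a : Fin 3) {D : DecidablePred fun s : Fin 3 → Bool => s a = true} :
    (@Finset.filter _ _ D univ).card = 4 := by
  have : @Finset.filter _ _ D univ
      = Fintype.piFinset (fun i => if i = a then ({true} : Finset Bool) else univ) := by
    ext f
    simp only [mem_filter, mem_univ, true_and, Fintype.mem_piFinset]
    constructor
    · intro h1 i
      by_cases hia : i = a
      · subst hia; simp [h1]
      · simp [hia]
    · intro h
      have := h a; simpa using this
  rw [this, Fintype.card_piFinset]
  clear this D
  fin_cases a <;> simp [Fin.prod_univ_three]

lemma card_bool_planted :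
    ((univ : Finset (Fin 3 → Bool)).filter fun s => ∃ i, s i = true).card = 7 := by decide

lemma card_PlC : (PlC n).card = n.descFactorial 3 * 7 := by
  rw [PlC, card_product, card_univ, Fintype.card_embedding_eq, card_bool_planted]
  simp

lemma card_CSet_le (v w : Fin n) (hvw : v ≠ w) : (CSet n v w).card ≤ 72 * n := by
  classical
  have key : (CSet n v w).card ≤ (univ.filter fun f : Fin 3 → Fin n =>
      ∃ z : Fin 3 × Fin 3, z.1 ≠ z.2 ∧ f z.1 = v ∧ f z.2 = w).card
      * (univ.filter fun _ : Fin 3 → Bool => True).card := by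
    apply card_clause_le
    intro c hc
    simp only [CSet, mem_filter, mem_univ, true_and] at hc
    obtain ⟨⟨i, hi⟩, ⟨i', hi'⟩⟩ := hc
    refine ⟨⟨(i, i'), fun h => hvw ?_, hi, hi'⟩, trivial⟩
    rw [← hi, ← hi']
    exact congrArg c.1 h
  refine key.trans ?_
  have h2 : ∀ {D : DecidablePred fun _ : Fin 3 → Bool => True},
      (@Finset.filter _ _ D univ).card ≤ 8 := by
    intro D
    refine (Finset.card_le_card (@Finset.filter_subset _ (fun _ => True) D univ)).trans ?_
    simp [Fintype.card_fun]
  have h1 : ((univ : Finset (Fin 3 → Fin n)).filter fun f =>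
      ∃ z : Fin 3 × Fin 3, z.1 ≠ z.2 ∧ f z.1 = v ∧ f z.2 = w).card ≤ 9 * n := by
    have hsub2 : (univ : Finset (Fin 3 → Fin n)).filter (fun f =>
        ∃ z : Fin 3 × Fin 3, z.1 ≠ z.2 ∧ f z.1 = v ∧ f z.2 = w)
        ⊆ ((univ : Finset (Fin 3 × Fin 3)).filter fun z => z.1 ≠ z.2).biUnion
            fun z => univ.filter fun f => f z.1 = v ∧ f z.2 = w := by
      intro f hf
      simp only [mem_filter, mem_univ, true_and] at hf
      obtain ⟨z, hz, h1, h2⟩ := hf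
      simp only [mem_biUnion, mem_filter, mem_univ, true_and]
      exact ⟨z, hz, h1, h2⟩
    refine (card_le_card hsub2).trans ?_
    refine (card_biUnion_le).trans ?_
    have hb : ∀ z ∈ (univ : Finset (Fin 3 × Fin 3)).filter fun z => z.1 ≠ z.2,
        (univ.filter fun f : Fin 3 → Fin n => f z.1 = v ∧ f z.2 = w).card ≤ n := by
      intro z hz
      simp only [mem_filter, mem_univ, true_and] at hz
      exact le_of_eq (card_fun_pinned z.1 z.2 hz v w)
    refine (Finset.sum_le_card_nsmul _ _ n hb).trans ?_
    have hc : ((univ : Finset (Fin 3 × Fin 3)).filter fun z => z.1 ≠ z.2).card ≤ 9 := by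
      refine (card_filter_le _ _).trans ?_
      simp
    rw [smul_eq_mul]
    exact Nat.mul_le_mul_right n hc
  calc (univ.filter fun f : Fin 3 → Fin n =>
      ∃ z : Fin 3 × Fin 3, z.1 ≠ z.2 ∧ f z.1 = v ∧ f z.2 = w).card
      * (univ.filter fun _ : Fin 3 → Bool => True).card
      ≤ (9 * n) * 8 := Nat.mul_le_mul h1 h2
    _ = 72 * n := by ring

lemma card_Az_le (z : Fin n) :
    ((univ : Finset (Clause n)).filter fun c => typePNN c ∧ posIn c z).card ≤ 12 * n ^ 2 := by
  classical
  have hsub : (univ : Finset (Clause n)).filter (fun c => typePNN c ∧ posIn c z)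
      ⊆ (univ : Finset (Fin 3)).biUnion fun i =>
          univ.filter fun c : Clause n => ((c.1 : Fin 3 → Fin n) i = z) ∧ (c.2 i = true) := by
    intro c hc
    simp only [mem_filter, mem_univ, true_and] at hc
    obtain ⟨_, i, hi1, hi2⟩ := hc
    simp only [mem_biUnion, mem_filter, mem_univ, true_and]
    exact ⟨i, hi1, hi2⟩
  refine (card_le_card hsub).trans ?_
  refine (card_biUnion_le).trans ?_
  have hb : ∀ i : Fin 3, ((univ : Finset (Clause n)).filter fun c =>
      ((c.1 : Fin 3 → Fin n) i = z) ∧ (c.2 i = true)).card ≤ n ^ 2 * 4 := by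
    intro i
    refine (card_clause_le (fun f => f i = z) (fun s => s i = true) ?_).trans ?_
    · intro c hc
      simp only [mem_filter, mem_univ, true_and] at hc
      exact hc
    · rw [card_fun_pinned_one, card_bool_pinned]
  calc ∑ i : Fin 3, ((univ : Finset (Clause n)).filter fun c =>
        ((c.1 : Fin 3 → Fin n) i = z) ∧ (c.2 i = true)).card
      ≤ ∑ i : Fin 3, n ^ 2 * 4 := Finset.sum_le_sum fun i _ => hb i
    _ = 12 * n ^ 2 := by simp [Fin.sum_univ_three]; ring

lemma card_ASet_le (x y : Fin n) : (ASet n x y).card ≤ 24 * n ^ 2 := by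
  classical
  have hsub : ASet n x y ⊆ (univ.filter fun c : Clause n => typePNN c ∧ posIn c x)
      ∪ (univ.filter fun c => typePNN c ∧ posIn c y) := by
    intro c hc
    simp only [ASet, mem_filter, mem_univ, true_and, mem_union] at hc ⊢
    tauto
  refine (card_le_card hsub).trans ?_
  refine (card_union_le _ _).trans ?_
  have h1 := card_Az_le (n := n) x
  have h2 := card_Az_le (n := n) y
  omega

def avoidEquiv (z : Fin n) :
    {e : Fin 3 ↪ Fin n // ¬ ∃ i, e i = z} ≃ (Fin 3 ↪ {w : Fin n // w ≠ z}) where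
  toFun e := ⟨fun i => ⟨e.1 i, fun h => e.2 ⟨i, h⟩⟩,
    fun _ _ hij => e.1.injective (congrArg Subtype.val hij)⟩
  invFun E := ⟨⟨fun i => (E i).1, fun _ _ hij => E.injective (Subtype.ext hij)⟩,
    fun h => (E h.choose).2 h.choose_spec⟩
  left_inv _ := rfl
  right_inv _ := rfl

lemma card_avoid (z : Fin n) :
    ((univ : Finset (Fin 3 ↪ Fin n)).filter fun e => ¬ ∃ i, e i = z).card
      = (n - 1).descFactorial 3 := by
  classical
  rw [← Fintype.card_subtype]
  rw [Fintype.card_congr (avoidEquiv z), Fintype.card_embedding_eq]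
  congr 1
  · simp [Fintype.card_subtype_compl]

lemma card_Az_ge (z : Fin n) (hn : 3 ≤ n) :
    3 * ((n - 1) * (n - 2))
      ≤ ((univ : Finset (Clause n)).filter fun c => typePNN c ∧ posIn c z).card := by
  classical
  -- embeddings hitting z inject into A_z
  have hinj : ((univ : Finset (Fin 3 ↪ Fin n)).filter fun e => ∃ i, e i = z).card
      ≤ ((univ : Finset (Clause n)).filter fun c => typePNN c ∧ posIn c z).card := by
    apply card_le_card_of_injOn (fun e => ((e, fun i => decide (e i = z)) : Clause n))
    · intro e he
      simp only [mem_filter, mem_univ, true_and, coe_filter, Set.mem_setOf_eq] at he ⊢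
      obtain ⟨i0, hi0⟩ := he
      refine ⟨⟨i0, by simp [hi0], fun i' hne => ?_⟩, ⟨i0, hi0, by simp [hi0]⟩⟩
      simp only [decide_eq_false_iff_not]
      intro h'
      exact hne (e.injective (by rw [h', hi0]))
    · intro e1 _ e2 _ h
      exact congrArg Prod.fst h
  refine le_trans ?_ hinj
  -- count embeddings hitting z
  have hcompl : ((univ : Finset (Fin 3 ↪ Fin n)).filter fun e => ¬ ∃ i, e i = z).card
      = (n - 1).descFactorial 3 := card_avoid z
  have htot := card_filter_add_card_filter_not
    (s := (univ : Finset (Fin 3 ↪ Fin n))) (p := fun e => ∃ i, e i = z)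
  rw [card_univ, Fintype.card_embedding_eq] at htot
  obtain ⟨k, rfl⟩ : ∃ k, n = k + 3 := ⟨n - 3, by omega⟩
  have h1 : (k + 3).descFactorial 3 = (k+1)*(k+2)*(k+3) := by
    simp [Nat.descFactorial]; ring
  have h2 : (k + 3 - 1).descFactorial 3 = k*(k+1)*(k+2) := by
    have : k + 3 - 1 = k + 2 := by omega
    rw [this]; simp [Nat.descFactorial]; ring
  simp only [Fintype.card_fin] at htot
  rw [h1] at htot
  rw [h2] at hcompl
  have hs1 : k + 3 - 1 = k + 2 := by omega
  have hs2 : k + 3 - 2 = k + 1 := by omega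
  rw [hs1, hs2]
  rw [hcompl] at htot
  have key : (k+1)*(k+2)*(k+3) = 3*((k+2)*(k+1)) + k*(k+1)*(k+2) := by ring
  rw [key] at htot
  exact le_of_eq (Nat.add_right_cancel htot).symm


lemma ASet_subset_PlC {x y : Fin n} : ASet n x y ⊆ PlC n := by
  intro c hc
  simp only [ASet, mem_filter, mem_univ, true_and] at hc
  obtain ⟨⟨i, hi, _⟩, _⟩ := hc
  exact mem_PlC.mpr ⟨i, hi⟩

lemma card_ASet_ge (x y : Fin n) (hxy : x ≠ y) (hn : 3 ≤ n) :
    6 * ((n - 1) * (n - 2)) ≤ (ASet n x y).card := by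
  have hsub : ((univ : Finset (Clause n)).filter fun c => typePNN c ∧ posIn c x)
      ∪ (univ.filter fun c => typePNN c ∧ posIn c y) ⊆ ASet n x y := by
    intro c hc
    simp only [mem_union, mem_filter, mem_univ, true_and] at hc
    simp only [ASet, mem_filter, mem_univ, true_and]
    tauto
  have hdisj : Disjoint ((univ : Finset (Clause n)).filter fun c => typePNN c ∧ posIn c x)
      (univ.filter fun c => typePNN c ∧ posIn c y) := by
    rw [Finset.disjoint_left]
    intro c hc1 hc2
    simp only [mem_filter, mem_univ, true_and] at hc1 hc2
    obtain ⟨⟨i0, _, hf⟩, ⟨i1, hx1, hx2⟩⟩ := hc1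
    obtain ⟨_, ⟨i2, hy1, hy2⟩⟩ := hc2
    have e1 : i1 = i0 := by
      by_contra hne
      rw [hf i1 hne] at hx2
      exact Bool.false_ne_true hx2
    have e2 : i2 = i0 := by
      by_contra hne
      rw [hf i2 hne] at hy2
      exact Bool.false_ne_true hy2
    exact hxy (by rw [← hx1, e1, ← e2, hy1])
  calc 6 * ((n - 1) * (n - 2))
      = 3 * ((n - 1) * (n - 2)) + 3 * ((n - 1) * (n - 2)) := by ring
    _ ≤ _ + _ := Nat.add_le_add (card_Az_ge x hn) (card_Az_ge y hn)
    _ = (((univ : Finset (Clause n)).filter fun c => typePNN c ∧ posIn c x)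
        ∪ (univ.filter fun c => typePNN c ∧ posIn c y)).card :=
        (card_union_of_disjoint hdisj).symm
    _ ≤ (ASet n x y).card := card_le_card hsub

noncomputable def EventF (n m : ℕ) (ℓ : ℕ) (v : Fin (ℓ+1) → Fin n) (j : Fin ℓ ↪ Fin m)
    (T : Finset (Fin m)) : Finset (Formula n m) :=
  univ.filter fun φ =>
    (∀ i : Fin ℓ, φ (j i) ∈ CSet n (v i.castSucc) (v i.succ)) ∧
    (∀ t ∈ T, φ t ∈ ASet n (v 0) (v (Fin.last ℓ))) ∧
    (∀ t, t ∉ T → (∀ i, j i ≠ t) → φ t ∈ PlC n \ ASet n (v 0) (v (Fin.last ℓ)))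

lemma card_EventF_le {ℓ : ℕ} (v : Fin (ℓ+1) → Fin n) (j : Fin ℓ ↪ Fin m)
    (T : Finset (Fin m)) (hv1 : ∀ i : Fin ℓ, v i.castSucc ≠ v i.succ)
    (hv2 : v 0 ≠ v (Fin.last ℓ)) (hT : T ⊆ (Finset.map j univ)ᶜ) (hn : 3 ≤ n) :
    (EventF n m ℓ v j T).card
      ≤ (72*n)^ℓ * (24*n^2)^T.card
          * ((PlC n).card - 6*((n-1)*(n-2)))^(m - ℓ - T.card) := by
  classical
  set A := ASet n (v 0) (v (Fin.last ℓ)) with hA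
  set s : Fin m → Finset (Clause n) := fun t =>
    if ht : ∃ i, j i = t then CSet n (v ht.choose.castSucc) (v ht.choose.succ)
    else if t ∈ T then A else PlC n \ A with hs
  have hsub : EventF n m ℓ v j T ⊆ Fintype.piFinset s := by
    intro φ hφ
    simp only [EventF, mem_filter, mem_univ, true_and] at hφ
    obtain ⟨h1, h2, h3⟩ := hφ
    rw [Fintype.mem_piFinset]
    intro t
    rw [hs]
    dsimp only
    split_ifs with ht htT
    · have h := h1 ht.choose
      rwa [ht.choose_spec] at h
    · exact h2 t htT
    · exact h3 t htT (fun i hi => ht ⟨i, hi⟩)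
  refine (card_le_card hsub).trans ?_
  rw [Fintype.card_piFinset]
  set J := Finset.map j univ with hJ
  have hdJT : Disjoint J T := by
    rw [Finset.disjoint_right]
    intro t htT
    exact Finset.mem_compl.mp (hT htT)
  have hsplit : (univ : Finset (Fin m)) = (J ∪ T) ∪ (J ∪ T)ᶜ := (Finset.union_compl _).symm
  rw [hsplit, Finset.prod_union disjoint_compl_right, Finset.prod_union hdJT]
  have hbJ : ∏ t ∈ J, (s t).card ≤ (72*n)^ℓ := by
    have : ∀ t ∈ J, (s t).card ≤ 72*n := by
      intro t ht
      obtain ⟨i, _, rfl⟩ := Finset.mem_map.mp ht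
      have hex : ∃ i', j i' = j i := ⟨i, rfl⟩
      rw [hs]
      dsimp only
      rw [dif_pos hex]
      exact card_CSet_le _ _ (hv1 hex.choose)
    refine (Finset.prod_le_pow_card _ _ _ this).trans ?_
    rw [hJ, Finset.card_map, card_univ, Fintype.card_fin]
  have hbT : ∏ t ∈ T, (s t).card ≤ (24*n^2)^T.card := by
    refine Finset.prod_le_pow_card _ _ _ ?_
    intro t ht
    have hnot : ¬ ∃ i, j i = t := by
      intro ⟨i, hi⟩
      exact (Finset.mem_compl.mp (hT ht)) (Finset.mem_map.mpr ⟨i, mem_univ _, hi⟩)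
    rw [hs]
    dsimp only
    rw [dif_neg hnot, if_pos ht]
    exact card_ASet_le _ _
  have hbR : ∏ t ∈ (J ∪ T)ᶜ, (s t).card
      ≤ ((PlC n).card - 6*((n-1)*(n-2)))^(m - ℓ - T.card) := by
    have hb : ∀ t ∈ (J ∪ T)ᶜ, (s t).card ≤ (PlC n).card - 6*((n-1)*(n-2)) := by
      intro t ht
      rw [Finset.mem_compl, Finset.mem_union] at ht
      push_neg at ht
      have hnot : ¬ ∃ i, j i = t := by
        intro ⟨i, hi⟩
        exact ht.1 (Finset.mem_map.mpr ⟨i, mem_univ _, hi⟩)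
      rw [hs]
      dsimp only
      rw [dif_neg hnot, if_neg ht.2]
      rw [Finset.card_sdiff_of_subset ASet_subset_PlC]
      exact Nat.sub_le_sub_left (card_ASet_ge _ _ hv2 hn) _
    refine (Finset.prod_le_pow_card _ _ _ hb).trans ?_
    have hcard : ((J ∪ T)ᶜ).card = m - ℓ - T.card := by
      rw [Finset.card_compl, Finset.card_union_of_disjoint hdJT, hJ, Finset.card_map,
        card_univ, Fintype.card_fin, Fintype.card_fin]
      omega
    rw [hcard]
  calc (∏ t ∈ J, (s t).card) * (∏ t ∈ T, (s t).card) * (∏ t ∈ (J ∪ T)ᶜ, (s t).card)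
      ≤ (72*n)^ℓ * (24*n^2)^T.card * ((PlC n).card - 6*((n-1)*(n-2)))^(m - ℓ - T.card) :=
        Nat.mul_le_mul (Nat.mul_le_mul hbJ hbT) hbR

lemma card_planted_eq :
    ((univ : Finset (Formula n m)).filter fun φ => Planted φ).card = (PlC n).card ^ m := by
  classical
  have h : ((univ : Finset (Formula n m)).filter fun φ => Planted φ)
      = Fintype.piFinset (fun _ : Fin m => PlC n) := by
    ext φ
    rw [Finset.mem_filter]
    simp only [mem_univ, true_and, Fintype.mem_piFinset, Planted]
    exact ⟨fun h t => mem_PlC.mpr (h t), fun h t => mem_PlC.mp (h t)⟩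
  rw [h, Fintype.card_piFinset]
  simp

def Bad (n m : ℕ) (d1 ℓ : ℕ) (φ : Formula n m) : Prop :=
  ∃ v : Fin (ℓ+1) → Fin n, ∃ j : Fin ℓ ↪ Fin m,
    (∀ i : Fin ℓ, v i.castSucc ≠ v i.succ) ∧ v 0 ≠ v (Fin.last ℓ) ∧
    (∀ i : Fin ℓ, φ (j i) ∈ CSet n (v i.castSucc) (v i.succ)) ∧
    ((univ.filter fun t => (∀ i, j i ≠ t) ∧ φ t ∈ ASet n (v 0) (v (Fin.last ℓ))).card ≤ 2 * d1)

lemma card_bad_le (d1 d2 : ℕ) (hn : 3 ≤ n) :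
    ((univ : Finset (Formula n m)).filter fun φ =>
        Planted φ ∧ ∃ ℓ ∈ Icc 1 d2, Bad n m d1 ℓ φ).card
      ≤ ∑ ℓ ∈ Icc 1 d2, ∑ a ∈ range (2*d1+1),
          n^(ℓ+1) * m^ℓ * m^a
            * ((72*n)^ℓ * (24*n^2)^a * ((PlC n).card - 6*((n-1)*(n-2)))^(m-ℓ-a)) := by
  classical
  -- the covering family
  have hsub : ((univ : Finset (Formula n m)).filter fun φ =>
        Planted φ ∧ ∃ ℓ ∈ Icc 1 d2, Bad n m d1 ℓ φ)
      ⊆ (Icc 1 d2).biUnion fun ℓ =>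
          (range (2*d1+1)).biUnion fun a =>
            ((univ : Finset (Fin (ℓ+1) → Fin n)).filter fun v =>
                (∀ i : Fin ℓ, v i.castSucc ≠ v i.succ) ∧ v 0 ≠ v (Fin.last ℓ)).biUnion fun v =>
              (univ : Finset (Fin ℓ ↪ Fin m)).biUnion fun j =>
                (Finset.powersetCard a ((Finset.map j univ)ᶜ)).biUnion fun T =>
                  EventF n m ℓ v j T := by
    intro φ hφ
    simp only [mem_filter, mem_univ, true_and] at hφ
    obtain ⟨hP, ℓ, hℓ, v, j, hv1, hv2, hC, hcount⟩ := hφ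
    set T : Finset (Fin m) :=
      ((Finset.map j univ)ᶜ).filter (fun t => φ t ∈ ASet n (v 0) (v (Fin.last ℓ))) with hT
    have hTsub : T ⊆ (Finset.map j univ)ᶜ := filter_subset _ _
    have hTcard : T.card ≤ 2*d1 := by
      refine le_trans (card_le_card ?_) hcount
      intro t ht
      rw [hT, mem_filter, Finset.mem_compl] at ht
      simp only [mem_filter, mem_univ, true_and]
      refine ⟨fun i hi => ht.1 (Finset.mem_map.mpr ⟨i, mem_univ _, hi⟩), ht.2⟩
    simp only [mem_biUnion]
    refine ⟨ℓ, hℓ, T.card, by simp [Nat.lt_succ_iff, hTcard], v, ?_, j, mem_univ _, T,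
      Finset.mem_powersetCard.mpr ⟨hTsub, rfl⟩, ?_⟩
    · simp only [mem_filter, mem_univ, true_and]; exact ⟨hv1, hv2⟩
    · simp only [EventF, mem_filter, mem_univ, true_and]
      refine ⟨hC, ?_, ?_⟩
      · intro t ht
        rw [hT, mem_filter] at ht
        exact ht.2
      · intro t htT hjt
        rw [Finset.mem_sdiff]
        constructor
        · exact mem_PlC.mpr (hP t)
        · intro hmem
          apply htT
          rw [hT, mem_filter, Finset.mem_compl]
          exact ⟨fun hc => by
            obtain ⟨i, _, hi⟩ := Finset.mem_map.mp hc
            exact hjt i hi, hmem⟩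
  refine (card_le_card hsub).trans ?_
  refine (card_biUnion_le).trans ?_
  refine Finset.sum_le_sum ?_
  intro ℓ hℓ
  refine (card_biUnion_le).trans ?_
  refine Finset.sum_le_sum ?_
  intro a ha
  refine (card_biUnion_le).trans ?_
  calc ∑ v ∈ ((univ : Finset (Fin (ℓ+1) → Fin n)).filter fun v =>
          (∀ i : Fin ℓ, v i.castSucc ≠ v i.succ) ∧ v 0 ≠ v (Fin.last ℓ)),
        ((univ : Finset (Fin ℓ ↪ Fin m)).biUnion fun j =>
          (Finset.powersetCard a ((Finset.map j univ)ᶜ)).biUnion fun T =>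
            EventF n m ℓ v j T).card
      ≤ ∑ _v ∈ ((univ : Finset (Fin (ℓ+1) → Fin n)).filter fun v =>
          (∀ i : Fin ℓ, v i.castSucc ≠ v i.succ) ∧ v 0 ≠ v (Fin.last ℓ)),
          m^ℓ * (m^a * ((72*n)^ℓ * (24*n^2)^a
            * ((PlC n).card - 6*((n-1)*(n-2)))^(m-ℓ-a))) := by
        refine Finset.sum_le_sum ?_
        intro v hv
        simp only [mem_filter, mem_univ, true_and] at hv
        refine (card_biUnion_le).trans ?_
        calc ∑ j ∈ (univ : Finset (Fin ℓ ↪ Fin m)),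
              ((Finset.powersetCard a ((Finset.map j univ)ᶜ)).biUnion fun T =>
                EventF n m ℓ v j T).card
            ≤ ∑ _j ∈ (univ : Finset (Fin ℓ ↪ Fin m)),
                m^a * ((72*n)^ℓ * (24*n^2)^a
                  * ((PlC n).card - 6*((n-1)*(n-2)))^(m-ℓ-a)) := by
              refine Finset.sum_le_sum ?_
              intro j _
              refine (card_biUnion_le).trans ?_
              calc ∑ T ∈ Finset.powersetCard a ((Finset.map j univ)ᶜ),
                    (EventF n m ℓ v j T).card
                  ≤ ∑ T ∈ Finset.powersetCard a ((Finset.map j univ)ᶜ),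
                      ((72*n)^ℓ * (24*n^2)^a
                        * ((PlC n).card - 6*((n-1)*(n-2)))^(m-ℓ-a)) := by
                    refine Finset.sum_le_sum ?_
                    intro T hT
                    obtain ⟨hTsub, hTcard⟩ := Finset.mem_powersetCard.mp hT
                    have := card_EventF_le v j T hv.1 hv.2 hTsub hn
                    rw [hTcard] at this
                    exact this
                _ ≤ m^a * ((72*n)^ℓ * (24*n^2)^a
                      * ((PlC n).card - 6*((n-1)*(n-2)))^(m-ℓ-a)) := by
                    rw [Finset.sum_const, smul_eq_mul]
                    refine Nat.mul_le_mul_right _ ?_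
                    rw [Finset.card_powersetCard]
                    refine (Nat.choose_le_pow _ _).trans ?_
                    exact Nat.pow_le_pow_left (by
                      refine (card_le_card (subset_univ _)).trans ?_
                      simp) a
          _ ≤ m^ℓ * (m^a * ((72*n)^ℓ * (24*n^2)^a
                * ((PlC n).card - 6*((n-1)*(n-2)))^(m-ℓ-a))) := by
              rw [Finset.sum_const, smul_eq_mul, card_univ]
              refine Nat.mul_le_mul_right _ ?_
              rw [Fintype.card_embedding_eq, Fintype.card_fin, Fintype.card_fin]
              exact Nat.descFactorial_le_pow _ _
    _ ≤ n^(ℓ+1) * m^ℓ * m^a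
          * ((72*n)^ℓ * (24*n^2)^a * ((PlC n).card - 6*((n-1)*(n-2)))^(m-ℓ-a)) := by
        rw [Finset.sum_const, smul_eq_mul]
        have h1 : (((univ : Finset (Fin (ℓ+1) → Fin n)).filter fun v =>
            (∀ i : Fin ℓ, v i.castSucc ≠ v i.succ) ∧ v 0 ≠ v (Fin.last ℓ))).card
            ≤ n^(ℓ+1) := by
          refine (card_le_card (subset_univ _)).trans ?_
          rw [card_univ]
          simp [Fintype.card_fun]
        calc _ ≤ (n^(ℓ+1)) * (m^ℓ * (m^a * ((72*n)^ℓ * (24*n^2)^a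
              * ((PlC n).card - 6*((n-1)*(n-2)))^(m-ℓ-a)))) :=
              Nat.mul_le_mul_right _ h1
          _ = _ := by ring


def CW (φ : Formula n m) (x y : Fin n) (ℓ : ℕ) : Prop :=
  ∃ v : ℕ → Fin n, v 0 = x ∧ v ℓ = y ∧
    ∀ i < ℓ, v i ≠ v (i+1) ∧ ∃ t : Fin m, φ t ∈ CSet n (v i) (v (i+1))

lemma adj_clause {φ : Formula n m} {a b : Fin n} (h : (primalGraph φ).Adj a b) :
    a ≠ b ∧ ∃ t, φ t ∈ CSet n a b := by
  rw [primalGraph, SimpleGraph.fromRel_adj] at h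
  obtain ⟨hne, h | h⟩ := h <;> obtain ⟨t, i, i', h1, h2⟩ := h
  · exact ⟨hne, t, by
      simp only [CSet, mem_filter, mem_univ, true_and]
      exact ⟨⟨i, h1⟩, ⟨i', h2⟩⟩⟩
  · exact ⟨hne, t, by
      simp only [CSet, mem_filter, mem_univ, true_and]
      exact ⟨⟨i', h2⟩, ⟨i, h1⟩⟩⟩

lemma walk_to_CW {φ : Formula n m} {x y : Fin n} (w : (primalGraph φ).Walk x y) :
    CW φ x y w.length := by
  induction w with
  | nil => exact ⟨fun _ => _, rfl, rfl, fun i hi => absurd hi (Nat.not_lt_zero _)⟩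
  | @cons a b c h p ih =>
    obtain ⟨v', h0, hlen, hprop⟩ := ih
    refine ⟨fun i => if i = 0 then a else v' (i-1), if_pos rfl, ?_, ?_⟩
    · rw [SimpleGraph.Walk.length_cons]
      dsimp only
      rw [if_neg (Nat.succ_ne_zero _)]
      simpa using hlen
    · intro i hi
      rw [SimpleGraph.Walk.length_cons] at hi
      dsimp only
      rcases i with _ | k
      · simp only [if_pos rfl, if_neg (Nat.succ_ne_zero 0), Nat.sub_self]
        rw [h0]
        exact adj_clause h
      · simp only [if_neg (Nat.succ_ne_zero k), if_neg (Nat.succ_ne_zero (k+1)),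
          Nat.add_sub_cancel]
        exact hprop k (by omega)

lemma CW_to_Bad {φ : Formula n m} {x y : Fin n} (hxy : x ≠ y) {L : ℕ}
    (hL : CW φ x y L) (d1 : ℕ) (hIx : kIsolated φ d1 x) (hIy : kIsolated φ d1 y) :
    ∃ ℓ, 1 ≤ ℓ ∧ ℓ ≤ L ∧ Bad n m d1 ℓ φ := by
  classical
  have hP : ∃ ℓ, CW φ x y ℓ := ⟨L, hL⟩
  set ℓ := Nat.find hP with hℓdef
  have hspec : CW φ x y ℓ := Nat.find_spec hP
  have hmin : ∀ ℓ' < ℓ, ¬ CW φ x y ℓ' := fun ℓ' h => Nat.find_min hP h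
  have hℓL : ℓ ≤ L := Nat.find_min' hP hL
  obtain ⟨v, hv0, hvℓ, hprop⟩ := hspec
  have hpos : 1 ≤ ℓ := by
    by_contra hc
    push_neg at hc
    interval_cases ℓ
    exact hxy (hv0 ▸ hvℓ ▸ rfl)
  -- choose clauses along the walk
  have hex : ∀ i, i < ℓ → ∃ t : Fin m, φ t ∈ CSet n (v i) (v (i+1)) :=
    fun i hi => (hprop i hi).2
  set j : ℕ → Fin m := fun i =>
    if h : i < ℓ then (hex i h).choose else (hex 0 hpos).choose with hjdef
  have jspec : ∀ i, (h : i < ℓ) → φ (j i) ∈ CSet n (v i) (v (i+1)) := by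
    intro i h
    rw [hjdef]
    dsimp only
    rw [dif_pos h]
    exact (hex i h).choose_spec
  -- injectivity from minimality
  have hinj : ∀ i k : ℕ, i < k → k < ℓ → j i ≠ j k := by
    intro i k hik hkℓ heq
    have hci : φ (j i) ∈ CSet n (v i) (v (i+1)) := jspec i (lt_trans hik hkℓ)
    have hck : φ (j i) ∈ CSet n (v k) (v (k+1)) := heq ▸ jspec k hkℓ
    by_cases hvk : v i = v (k+1)
    · -- shortcut dropping [i, k+1]
      set δ := k + 1 - i with hδdef
      have hδ1 : 1 ≤ δ := by omega
      set ℓ' := ℓ - δ with hℓ'def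
      have hℓ'lt : ℓ' < ℓ := by omega
      apply hmin ℓ' hℓ'lt
      have key : ∀ t, i ≤ t → (if t ≤ i then v t else v (t + δ)) = v (t + δ) := by
        intro t ht
        by_cases hti : t ≤ i
        · have heq : t = i := le_antisymm hti ht
          subst heq
          rw [if_pos le_rfl]
          have he : t + δ = k + 1 := by omega
          rw [he]
          exact hvk
        · rw [if_neg hti]
      refine ⟨fun t => if t ≤ i then v t else v (t + δ), ?_, ?_, ?_⟩
      · dsimp only; rw [if_pos (Nat.zero_le i)]; exact hv0
      · have hiℓ' : i ≤ ℓ' := by omega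
        dsimp only
        rw [key ℓ' hiℓ']
        have he : ℓ' + δ = ℓ := by omega
        rw [he]; exact hvℓ
      · intro t htℓ'
        dsimp only
        rcases Nat.lt_or_ge t i with hti | hti
        · rw [if_pos (le_of_lt hti), if_pos (by omega : t + 1 ≤ i)]
          exact hprop t (by omega)
        · rw [key t hti, key (t+1) (by omega)]
          have he : t + 1 + δ = (t + δ) + 1 := by omega
          rw [he]
          exact hprop (t + δ) (by omega)
    · -- shortcut using clause (j i) as edge from v i to v (k+1)
      set δ := k - i with hδdef
      have hδ1 : 1 ≤ δ := by omega
      set ℓ' := ℓ - δ with hℓ'def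
      have hℓ'lt : ℓ' < ℓ := by omega
      apply hmin ℓ' hℓ'lt
      have key : ∀ t, i < t → (if t ≤ i then v t else v (t + δ)) = v (t + δ) := by
        intro t ht
        rw [if_neg (by omega)]
      refine ⟨fun t => if t ≤ i then v t else v (t + δ), ?_, ?_, ?_⟩
      · dsimp only; rw [if_pos (Nat.zero_le i)]; exact hv0
      · have hiℓ' : i < ℓ' := by omega
        dsimp only
        rw [key ℓ' hiℓ']
        have he : ℓ' + δ = ℓ := by omega
        rw [he]; exact hvℓ
      · intro t htℓ'
        dsimp only
        rcases Nat.lt_or_ge t i with hti | hti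
        · rw [if_pos (le_of_lt hti), if_pos (by omega : t + 1 ≤ i)]
          exact hprop t (by omega)
        · by_cases hlt : i < t
          · rw [key t hlt, key (t+1) (by omega)]
            have he : t + 1 + δ = (t + δ) + 1 := by omega
            rw [he]
            exact hprop (t + δ) (by omega)
          · have heq : t = i := by omega
            subst heq
            rw [if_pos le_rfl, key (t+1) (by omega)]
            have he : t + 1 + δ = k + 1 := by omega
            rw [he]
            refine ⟨hvk, j t, ?_⟩
            simp only [CSet, mem_filter, mem_univ, true_and] at hci hck ⊢
            exact ⟨hci.1, hck.2⟩
  -- assemble Bad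
  refine ⟨ℓ, hpos, hℓL, ?_⟩
  refine ⟨fun i => v i.val, ⟨fun i => j i.val, ?_⟩, ?_, ?_, ?_, ?_⟩
  · intro a b hab
    by_contra hne
    have hvalne : a.val ≠ b.val := fun hv => hne (Fin.ext hv)
    rcases Nat.lt_or_ge a.val b.val with h | h
    · exact hinj a.val b.val h b.isLt hab
    · exact hinj b.val a.val (by omega) a.isLt hab.symm
  · intro i
    have := (hprop i.val i.isLt).1
    simpa using this
  · have h0 : ((0 : Fin (ℓ+1)) : ℕ) = 0 := rfl
    have hl : ((Fin.last ℓ) : ℕ) = ℓ := rfl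
    simp only [h0, hl, hv0, hvℓ]
    exact hxy
  · intro i
    have := jspec i.val i.isLt
    exact this
  · -- counting condition
    have hsub : (univ.filter fun t => (∀ i : Fin ℓ, j i.val ≠ t) ∧
          φ t ∈ ASet n (v (0 : Fin (ℓ+1)).val) (v (Fin.last ℓ).val))
        ⊆ (univ.filter fun t => typePNN (φ t) ∧ posIn (φ t) x)
          ∪ (univ.filter fun t => typePNN (φ t) ∧ posIn (φ t) y) := by
      intro t ht
      simp only [mem_filter, mem_univ, true_and, mem_union] at ht ⊢
      obtain ⟨_, hA⟩ := ht
      simp only [ASet, mem_filter, mem_univ, true_and] at hA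
      have h0 : v ((0 : Fin (ℓ+1)) : ℕ) = x := hv0
      have hl : v ((Fin.last ℓ) : ℕ) = y := hvℓ
      rw [h0, hl] at hA
      tauto
    refine (card_le_card hsub).trans ?_
    refine (card_union_le _ _).trans ?_
    have h1 : (univ.filter fun t => typePNN (φ t) ∧ posIn (φ t) x).card ≤ d1 := hIx
    have h2 : (univ.filter fun t => typePNN (φ t) ∧ posIn (φ t) y).card ≤ d1 := hIy
    omega

lemma event_to_bad {d1 d2 : ℕ} {φ : Formula n m}
    (h : ∃ x y : Fin n, x ≠ y ∧ kIsolated φ d1 x ∧ kIsolated φ d1 y ∧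
      (primalGraph φ).Reachable x y ∧ (primalGraph φ).dist x y ≤ d2) :
    ∃ ℓ ∈ Icc 1 d2, Bad n m d1 ℓ φ := by
  obtain ⟨x, y, hxy, hIx, hIy, hreach, hdist⟩ := h
  obtain ⟨w, hw⟩ := hreach.exists_walk_length_eq_dist
  have hCW := walk_to_CW w
  rw [hw] at hCW
  obtain ⟨ℓ, h1, h2, hbad⟩ := CW_to_Bad hxy hCW d1 hIx hIy
  exact ⟨ℓ, mem_Icc.mpr ⟨h1, le_trans h2 hdist⟩, hbad⟩


lemma pow_le_factorial_mul_exp (s : ℝ) (hs : 0 ≤ s) (D : ℕ) :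
    s ^ D ≤ D.factorial * Real.exp s := by
  have h := Real.sum_le_exp_of_nonneg hs (D + 1)
  have hsingle : s ^ D / D.factorial ≤ ∑ i ∈ range (D + 1), s ^ i / i.factorial := by
    exact Finset.single_le_sum (f := fun i => s ^ i / i.factorial)
      (fun i _ => by positivity) (self_mem_range_succ D)
  have hD : (0 : ℝ) < D.factorial := by exact_mod_cast D.factorial_pos
  rw [div_le_iff₀ hD] at hsingle
  calc s ^ D ≤ (∑ i ∈ range (D + 1), s ^ i / i.factorial) * D.factorial := hsingle
    _ ≤ Real.exp s * D.factorial := by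
        exact mul_le_mul_of_nonneg_right h (le_of_lt hD)
    _ = D.factorial * Real.exp s := by ring

lemma cast_descK (n : ℕ) (hn : 3 ≤ n) :
    ((n.descFactorial 3 * 7 : ℕ) : ℝ) = 7 * (n:ℝ) * ((n:ℝ) - 1) * ((n:ℝ) - 2) := by
  have h : n.descFactorial 3 = (n - 2) * ((n - 1) * (n * 1)) := by
    simp [Nat.descFactorial]
  rw [h]
  have h1 : (1 : ℕ) ≤ n := by omega
  have h2 : (2 : ℕ) ≤ n := by omega
  push_cast [Nat.cast_sub h1, Nat.cast_sub h2]
  ring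

set_option maxHeartbeats 2000000 in
lemma ratio_bound (d1 d2 n m : ℕ) (hd1 : 1 ≤ d1) (hd2 : 1 ≤ d2)
    (hn6 : 6 ≤ n) (hnD : 7 * (d2 + 2 * d1) ≤ n) (hmn : n ≤ m) :
    ((∑ ℓ ∈ Icc 1 d2, ∑ a ∈ range (2*d1+1),
        n^(ℓ+1) * m^ℓ * m^a
          * ((72*n)^ℓ * (24*n^2)^a
            * (n.descFactorial 3 * 7 - 6*((n-1)*(n-2)))^(m-ℓ-a)) : ℕ) : ℝ)
      / ((n.descFactorial 3 * 7 : ℕ) : ℝ)^m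
    ≤ (d2 * (2*d1+1) * 21^d2 * 7^(2*d1) * 3 : ℝ) * n * ((m:ℝ)/n)^(d2+2*d1)
        * Real.exp (-(6/7) * ((m:ℝ)/n)) := by
  have hn3 : 3 ≤ n := by omega
  set K : ℕ := n.descFactorial 3 * 7 with hKdef
  set A : ℕ := 6*((n-1)*(n-2)) with hAdef
  set N : ℝ := (n : ℝ) with hNdef
  set M : ℝ := (m : ℝ) with hMdef
  set t : ℝ := M / N with htdef
  set D : ℕ := d2 + 2*d1 with hDdef
  have hN6 : (6:ℝ) ≤ N := by rw [hNdef]; exact_mod_cast hn6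
  have hNpos : (0:ℝ) < N := by linarith
  have hMN : N ≤ M := by rw [hNdef, hMdef]; exact_mod_cast hmn
  have hMpos : (0:ℝ) < M := by linarith
  have ht1 : (1:ℝ) ≤ t := (one_le_div hNpos).mpr hMN
  have hKr : (K:ℝ) = 7 * N * (N - 1) * (N - 2) := cast_descK n hn3
  have hKpos : (0:ℝ) < K := by
    rw [hKr]
    nlinarith [mul_pos (mul_pos (show (0:ℝ) < 7*N by linarith)
      (show (0:ℝ) < N-1 by linarith)) (show (0:ℝ) < N-2 by linarith)]
  have hKne : (K:ℝ) ≠ 0 := ne_of_gt hKpos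
  have hK2 : K = 7*n*((n-1)*(n-2)) := by
    rw [hKdef]
    have : n.descFactorial 3 = (n-2)*((n-1)*(n*1)) := by simp [Nat.descFactorial]
    rw [this]
    ring
  have hAK : A ≤ K := by
    rw [hAdef, hK2]
    calc 6*((n-1)*(n-2)) ≤ (7*n)*((n-1)*(n-2)) :=
          Nat.mul_le_mul_right _ (by omega)
      _ = 7*n*((n-1)*(n-2)) := by ring
  have hAr : (A:ℝ) = 6*((N-1)*(N-2)) := by
    rw [hAdef]
    have h1 : (1:ℕ) ≤ n := by omega
    have h2 : (2:ℕ) ≤ n := by omega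
    push_cast [Nat.cast_sub h1, Nat.cast_sub h2]
    ring
  set qn : ℝ := ((K - A : ℕ) : ℝ) with hqndef
  have hqn : qn = (K:ℝ) - (A:ℝ) := by rw [hqndef]; exact Nat.cast_sub hAK
  have hqn0 : 0 ≤ qn := by rw [hqndef]; positivity
  have hAdiv : (A:ℝ)/(K:ℝ) = 6/(7*N) := by
    rw [hAr, hKr]
    have h1 : N - 1 ≠ 0 := by linarith
    have h2 : N - 2 ≠ 0 := by linarith
    field_simp
  have hq1 : qn/(K:ℝ) ≤ Real.exp (-(6/(7*N))) := by
    have : qn/(K:ℝ) = 1 - 6/(7*N) := by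
      rw [hqn, sub_div, div_self hKne, hAdiv]
    rw [this]
    have := Real.add_one_le_exp (-(6/(7*N)))
    linarith
  have hq0 : 0 ≤ qn/(K:ℝ) := div_nonneg hqn0 (le_of_lt hKpos)
  -- cast the sum
  push_cast
  rw [Finset.sum_div]
  have hbound : ∀ ℓ ∈ Icc 1 d2,
      (∑ a ∈ range (2*d1+1), (N^(ℓ+1) * M^ℓ * M^a
          * ((72*N)^ℓ * (24*N^2)^a * qn^(m-ℓ-a)))) / (K:ℝ)^m
        ≤ (2*d1+1) * (N * (21*t)^d2 * (7*t)^(2*d1) * (3 * Real.exp (-(6/7)*t))) := by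
    intro ℓ hℓ
    rw [mem_Icc] at hℓ
    rw [Finset.sum_div]
    have hterm : ∀ a ∈ range (2*d1+1),
        (N^(ℓ+1) * M^ℓ * M^a * ((72*N)^ℓ * (24*N^2)^a * qn^(m-ℓ-a))) / (K:ℝ)^m
          ≤ N * (21*t)^d2 * (7*t)^(2*d1) * (3 * Real.exp (-(6/7)*t)) := by
      intro a ha
      rw [mem_range] at ha
      have haD : a ≤ 2*d1 := by omega
      have hℓaD : ℓ + a ≤ D := by omega
      have hDn : 7*D ≤ n := hnD
      have hℓam : ℓ + a ≤ m := by omega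
      have hsplit : (K:ℝ)^m = (K:ℝ)^ℓ * (K:ℝ)^a * (K:ℝ)^(m-ℓ-a) := by
        rw [← pow_add, ← pow_add]
        congr 1
        omega
      have heq : (N^(ℓ+1) * M^ℓ * M^a * ((72*N)^ℓ * (24*N^2)^a * qn^(m-ℓ-a))) / (K:ℝ)^m
          = (N * (72*N^2*M/K)^ℓ) * ((24*N^2*M/K)^a) * (qn/K)^(m-ℓ-a) := by
        rw [hsplit]
        rw [div_pow, div_pow, div_pow]
        rw [pow_succ]
        field_simp
        ring
      rw [heq]
      -- factor bounds
      have hf1core : 72*N^2*M/K ≤ 21*t := by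
        rw [div_le_iff₀ hKpos, htdef]
        rw [hKr]
        have h62 : N^2/2 ≤ (N-1)*(N-2) := by nlinarith
        have : 21 * (M/N) * (7*N*(N-1)*(N-2)) = 147 * M * ((N-1)*(N-2)) := by
          field_simp
          ring
        rw [this]
        nlinarith
      have hf2core : 24*N^2*M/K ≤ 7*t := by
        rw [div_le_iff₀ hKpos, htdef]
        rw [hKr]
        have h62 : N^2/2 ≤ (N-1)*(N-2) := by nlinarith
        have : 7 * (M/N) * (7*N*(N-1)*(N-2)) = 49 * M * ((N-1)*(N-2)) := by
          field_simp
          ring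
        rw [this]
        nlinarith
      have ht21 : (1:ℝ) ≤ 21*t := by linarith
      have ht7 : (1:ℝ) ≤ 7*t := by linarith
      have hf1 : N * (72*N^2*M/K)^ℓ ≤ N * (21*t)^d2 := by
        refine mul_le_mul_of_nonneg_left ?_ (le_of_lt hNpos)
        calc (72*N^2*M/K)^ℓ ≤ (21*t)^ℓ := by
              refine pow_le_pow_left₀ ?_ hf1core ℓ
              positivity
          _ ≤ (21*t)^d2 := pow_le_pow_right₀ ht21 hℓ.2
      have hf2 : (24*N^2*M/K)^a ≤ (7*t)^(2*d1) := by
        calc (24*N^2*M/K)^a ≤ (7*t)^a := by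
              refine pow_le_pow_left₀ ?_ hf2core a
              positivity
          _ ≤ (7*t)^(2*d1) := pow_le_pow_right₀ ht7 haD
      have hf3 : (qn/(K:ℝ))^(m-ℓ-a) ≤ 3 * Real.exp (-(6/7)*t) := by
        calc (qn/(K:ℝ))^(m-ℓ-a) ≤ (Real.exp (-(6/(7*N))))^(m-ℓ-a) :=
              pow_le_pow_left₀ hq0 hq1 _
          _ = Real.exp (-(6/(7*N)) * (m-ℓ-a : ℕ)) := by
              rw [← Real.exp_nat_mul]
              ring_nf
          _ ≤ Real.exp (-(6/7)*t + 1) := by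
              refine Real.exp_le_exp.mpr ?_
              have hcast : ((m-ℓ-a : ℕ):ℝ) ≥ M - D := by
                have : m - ℓ - a ≥ m - D := by omega
                have hle : ((m - D : ℕ):ℝ) ≤ ((m-ℓ-a : ℕ):ℝ) := by exact_mod_cast this
                refine le_trans ?_ hle
                push_cast
                have : (D:ℝ) ≥ 0 := by positivity
                have hsub := Nat.cast_sub (show D ≤ m by omega) (R := ℝ)
                rw [hsub]
              have hDN : 6*(D:ℝ) ≤ 7*N := by
                have : (7*D : ℕ) ≤ n := hnD
                have : ((7*D : ℕ):ℝ) ≤ N := by rw [hNdef]; exact_mod_cast this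
                push_cast at this
                linarith
              have hNne : N ≠ 0 := ne_of_gt hNpos
              have hexp : -(6/(7*N)) * ((m-ℓ-a : ℕ):ℝ) ≤ -(6/(7*N)) * (M - D) := by
                refine mul_le_mul_of_nonpos_left hcast ?_
                have : 0 < 7*N := by linarith
                have : 0 < 6/(7*N) := by positivity
                linarith
              refine le_trans hexp ?_
              have : -(6/(7*N)) * (M - D) = -(6/7)*(M/N) + (6*D)/(7*N) := by
                field_simp
                ring
              rw [this, htdef]
              have : (6*(D:ℝ))/(7*N) ≤ 1 := by
                rw [div_le_one (by linarith : (0:ℝ) < 7*N)]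
                exact hDN
              linarith
          _ = Real.exp (-(6/7)*t) * Real.exp 1 := by rw [← Real.exp_add]
          _ ≤ 3 * Real.exp (-(6/7)*t) := by
              have h3 : Real.exp 1 ≤ 3 := by
                have := Real.exp_one_lt_d9
                linarith
              have : Real.exp (-(6/7)*t) > 0 := Real.exp_pos _
              nlinarith
      calc (N * (72*N^2*M/K)^ℓ) * ((24*N^2*M/K)^a) * (qn/K)^(m-ℓ-a)
          ≤ (N * (21*t)^d2) * ((7*t)^(2*d1)) * (3 * Real.exp (-(6/7)*t)) := by
            refine mul_le_mul (mul_le_mul hf1 hf2 (by positivity) (by positivity)) hf3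
              (by positivity) (by positivity)
        _ = N * (21*t)^d2 * (7*t)^(2*d1) * (3 * Real.exp (-(6/7)*t)) := by ring
    calc ∑ a ∈ range (2*d1+1), (N^(ℓ+1) * M^ℓ * M^a
            * ((72*N)^ℓ * (24*N^2)^a * qn^(m-ℓ-a))) / (K:ℝ)^m
        ≤ ∑ _a ∈ range (2*d1+1),
            N * (21*t)^d2 * (7*t)^(2*d1) * (3 * Real.exp (-(6/7)*t)) :=
          Finset.sum_le_sum hterm
      _ = (2*d1+1) * (N * (21*t)^d2 * (7*t)^(2*d1) * (3 * Real.exp (-(6/7)*t))) := by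
          rw [Finset.sum_const, Finset.card_range]
          push_cast
          ring
  calc ∑ ℓ ∈ Icc 1 d2, (∑ a ∈ range (2*d1+1), (N^(ℓ+1) * M^ℓ * M^a
          * ((72*N)^ℓ * (24*N^2)^a * qn^(m-ℓ-a)))) / (K:ℝ)^m
      ≤ ∑ _ℓ ∈ Icc 1 d2,
          (2*d1+1) * (N * (21*t)^d2 * (7*t)^(2*d1) * (3 * Real.exp (-(6/7)*t))) := by
        refine Finset.sum_le_sum ?_
        intro ℓ hℓ
        exact hbound ℓ hℓ
    _ = d2 * ((2*d1+1) * (N * (21*t)^d2 * (7*t)^(2*d1) * (3 * Real.exp (-(6/7)*t)))) := by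
        rw [Finset.sum_const, Nat.card_Icc]
        push_cast
        ring
    _ = (d2 * (2*d1+1) * 21^d2 * 7^(2*d1) * 3 : ℝ) * N * t^(d2+2*d1)
          * Real.exp (-(6/7) * t) := by
        rw [mul_pow, mul_pow, pow_add]
        ring


lemma bound_tendsto (C : ℝ) (D : ℕ) (κ : ℝ) (hκ : 7/6 < κ) (m : ℕ → ℕ)
    (hρ : ∀ᶠ n : ℕ in atTop, κ * Real.log n * n ≤ (m n : ℝ)) :
    Tendsto (fun n : ℕ => C * (n * ((m n:ℝ)/n)^D * Real.exp (-(6/7) * ((m n:ℝ)/n))))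
      atTop (𝓝 0) := by
  have hκ0 : (0:ℝ) < κ := lt_trans (by norm_num) hκ
  have h1κ : 1/κ < 6/7 := by
    rw [div_lt_div_iff₀ hκ0 (by norm_num)]
    linarith
  have h1κ0 : 0 < 1/κ := by positivity
  set ε : ℝ := (6/7 - 1/κ)/2 with hεdef
  have hε : 0 < ε := by rw [hεdef]; linarith
  set β : ℝ := 6/7 - ε with hβdef
  have hβ : 0 < β := by rw [hβdef, hεdef]; linarith
  have hκβ : 1/κ < β := by rw [hβdef, hεdef]; linarith
  have hβκ : 1 < β * κ := by
    calc 1 = (1/κ) * κ := by field_simp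
      _ < β * κ := by exact mul_lt_mul_of_pos_right hκβ hκ0
  set Cε : ℝ := D.factorial / ε^D with hCεdef
  have hCε : 0 < Cε := by rw [hCεdef]; positivity
  -- show the inner part tends to zero and multiply by constant
  have hmain : Tendsto (fun n : ℕ => (n : ℝ) * ((m n:ℝ)/n)^D
      * Real.exp (-(6/7) * ((m n:ℝ)/n))) atTop (𝓝 0) := by
    apply squeeze_zero' (g := fun n : ℕ => Cε * Real.exp ((1 - β*κ) * Real.log n))
    · filter_upwards with n
      positivity
    · filter_upwards [hρ, eventually_ge_atTop 1] with n hn hn1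
      set t : ℝ := (m n : ℝ)/n with htdef
      have hnpos : (0:ℝ) < n := by exact_mod_cast hn1
      have hlog0 : 0 ≤ Real.log n := Real.log_nonneg (by exact_mod_cast hn1)
      have ht0 : 0 ≤ t := by positivity
      have htκ : κ * Real.log n ≤ t := by
        rw [htdef, le_div_iff₀ hnpos]
        exact hn
      have hpow : t^D ≤ Cε * Real.exp (ε * t) := by
        have h := pow_le_factorial_mul_exp (ε * t) (by positivity) D
        have hεD : (0:ℝ) < ε^D := by positivity
        rw [mul_pow] at h
        rw [hCεdef]
        rw [div_mul_eq_mul_div, le_div_iff₀ hεD]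
        calc t^D * ε^D = ε^D * t^D := by ring
          _ ≤ D.factorial * Real.exp (ε * t) := h
      calc (n : ℝ) * t^D * Real.exp (-(6/7) * t)
          ≤ (n : ℝ) * (Cε * Real.exp (ε * t)) * Real.exp (-(6/7) * t) := by
            refine mul_le_mul_of_nonneg_right (mul_le_mul_of_nonneg_left hpow ?_) ?_
            · positivity
            · positivity
        _ = Cε * ((n:ℝ) * (Real.exp (ε*t) * Real.exp (-(6/7)*t))) := by ring
        _ = Cε * ((n:ℝ) * Real.exp (-β * t)) := by
            rw [← Real.exp_add]
            congr 2
            rw [hβdef]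
            ring
        _ ≤ Cε * ((n:ℝ) * Real.exp (-β * (κ * Real.log n))) := by
            refine mul_le_mul_of_nonneg_left (mul_le_mul_of_nonneg_left ?_ ?_) (le_of_lt hCε)
            · refine Real.exp_le_exp.mpr ?_
              have h0 : 0 ≤ κ * Real.log n := by positivity
              nlinarith
            · positivity
        _ = Cε * (Real.exp (Real.log n) * Real.exp (-β * (κ * Real.log n))) := by
            rw [Real.exp_log hnpos]
        _ = Cε * Real.exp ((1 - β*κ) * Real.log n) := by
            rw [← Real.exp_add]
            congr 2
            ring
    · have hlim : Tendsto (fun n : ℕ => (1 - β*κ) * Real.log n) atTop atBot := by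
        have h1 : Tendsto (fun n : ℕ => Real.log n) atTop atTop :=
          Real.tendsto_log_atTop.comp tendsto_natCast_atTop_atTop
        have hneg : 1 - β*κ < 0 := by linarith
        exact Tendsto.const_mul_atTop_of_neg hneg h1
      have := (Real.tendsto_exp_atBot).comp hlim
      simpa using this.const_mul Cε
  simpa using hmain.const_mul C


lemma PlC_card_pos (hn : 3 ≤ n) : 0 < (PlC n).card := by
  rw [card_PlC]
  have h : n.descFactorial 3 = (n-2)*((n-1)*(n*1)) := by simp [Nat.descFactorial]
  rw [h]
  have h2 : 0 < n - 2 := by omega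
  have h1 : 0 < n - 1 := by omega
  have h0 : 0 < n := by omega
  exact Nat.mul_pos (Nat.mul_pos h2 (Nat.mul_pos h1 (by omega))) (by omega)

lemma prPlanted_eq_one_sub (n m : ℕ) (hn : 3 ≤ n) (E : Formula n m → Prop)
    (S : Finset (Formula n m)) (hS : ∀ φ, φ ∈ S ↔ Planted φ ∧ E φ) :
    prPlanted n m (fun φ => ¬ E φ) = 1 - (S.card : ℝ) / ((PlC n).card : ℝ)^m := by
  classical
  have hKpos : 0 < (PlC n).card := PlC_card_pos hn
  have hcompl : ((univ : Finset (Formula n m)).filter fun φ => Planted φ ∧ ¬ E φ).card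
      = (PlC n).card ^ m - S.card ∧ S.card ≤ (PlC n).card ^ m := by
    have hunion : S ∪ ((univ : Finset (Formula n m)).filter fun φ => Planted φ ∧ ¬ E φ)
        = univ.filter Planted := by
      ext φ
      simp only [mem_union, mem_filter, mem_univ, true_and, hS]
      tauto
    have hdisj : Disjoint S
        ((univ : Finset (Formula n m)).filter fun φ => Planted φ ∧ ¬ E φ) := by
      rw [Finset.disjoint_left]
      intro φ h1 h2
      rw [hS] at h1
      simp only [mem_filter, mem_univ, true_and] at h2
      tauto
    have hadd := card_union_of_disjoint hdisj
    rw [hunion, card_planted_eq] at hadd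
    omega
  have hKm : (0:ℝ) < ((PlC n).card:ℝ)^m := by
    have : (0:ℝ) < ((PlC n).card:ℝ) := by exact_mod_cast hKpos
    positivity
  unfold prPlanted condProb
  rw [filter_univ_inst (fun a => Planted a ∧ ¬ E a),
    filter_univ_inst (fun a : Formula n m => Planted a)]
  rw [show ((univ : Finset (Formula n m)).filter fun a => Planted a) =
    ((univ : Finset (Formula n m)).filter fun φ => Planted φ) from rfl]
  rw [card_planted_eq, hcompl.1, Nat.cast_sub hcompl.2]
  push_cast
  rw [sub_div, div_self (ne_of_gt hKm)]

end AuxDev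

/-- **Lemma (isolated variables are far apart).**  If `κ > 7/6` and `ρ = ρ(n) ≥ κ · ln n`,
then for any fixed integers `d₁, d₂ ≥ 1`, whp a random `φ ∈ Φ^plant(n, ρn)` contains no
two distinct `d₁`-isolated variables at distance at most `d₂` in the primal graph
`G(φ)`. -/
theorem isolated_vars_far_whp (κ : ℝ) (hκ : 7 / 6 < κ) (m : ℕ → ℕ)
    (hρ : ∀ᶠ n : ℕ in atTop, κ * Real.log n * n ≤ (m n : ℝ))
    (d1 d2 : ℕ) (hd1 : 1 ≤ d1) (hd2 : 1 ≤ d2) :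
    Tendsto (fun n : ℕ => prPlanted n (m n) fun φ =>
        ¬ ∃ x y : Fin n, x ≠ y ∧ kIsolated φ d1 x ∧ kIsolated φ d1 y ∧
          (primalGraph φ).Reachable x y ∧ (primalGraph φ).dist x y ≤ d2)
      atTop (𝓝 1) := by
  classical
  have hmge : ∀ᶠ n : ℕ in atTop, n ≤ m n := by
    filter_upwards [hρ, eventually_ge_atTop 3] with n hn h3
    have h3r : (3:ℝ) ≤ (n:ℝ) := by exact_mod_cast h3
    have hnpos : (0:ℝ) < (n:ℝ) := by linarith
    have hlog : (1:ℝ) ≤ Real.log n := by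
      rw [Real.le_log_iff_exp_le hnpos]
      have := Real.exp_one_lt_d9
      linarith
    have hκ1 : (1:ℝ) ≤ κ := by linarith
    have hκl : (1:ℝ) ≤ κ * Real.log n := by nlinarith
    have hmul := mul_le_mul_of_nonneg_right hκl (le_of_lt hnpos)
    rw [one_mul] at hmul
    have : (n:ℝ) ≤ (m n : ℝ) := le_trans hmul hn
    exact_mod_cast this
  have heq : ∀ᶠ n : ℕ in atTop,
      (prPlanted n (m n) fun φ =>
        ¬ ∃ x y : Fin n, x ≠ y ∧ kIsolated φ d1 x ∧ kIsolated φ d1 y ∧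
          (primalGraph φ).Reachable x y ∧ (primalGraph φ).dist x y ≤ d2)
        = 1 - (((univ : Finset (Formula n (m n))).filter fun φ => Planted φ ∧
            ∃ x y : Fin n, x ≠ y ∧ kIsolated φ d1 x ∧ kIsolated φ d1 y ∧
              (primalGraph φ).Reachable x y ∧ (primalGraph φ).dist x y ≤ d2).card : ℝ)
            / (((PlC n).card : ℝ))^(m n) := by
    filter_upwards [eventually_ge_atTop 3] with n hn
    exact prPlanted_eq_one_sub n (m n) hn _ _
      (fun φ => by simp only [mem_filter, mem_univ, true_and])
  have hb : ∀ᶠ n : ℕ in atTop,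
      (((univ : Finset (Formula n (m n))).filter fun φ => Planted φ ∧
          ∃ x y : Fin n, x ≠ y ∧ kIsolated φ d1 x ∧ kIsolated φ d1 y ∧
            (primalGraph φ).Reachable x y ∧ (primalGraph φ).dist x y ≤ d2).card : ℝ)
          / (((PlC n).card : ℝ))^(m n)
        ≤ ((d2 * (2*d1+1) * 21^d2 * 7^(2*d1) * 3 : ℝ)) *
            ((n:ℝ) * ((m n:ℝ)/(n:ℝ))^(d2+2*d1)
              * Real.exp (-(6/7) * ((m n:ℝ)/(n:ℝ)))) := by
    filter_upwards [hmge, eventually_ge_atTop (max 6 (7*(d2+2*d1)))] with n hnm hn6'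
    have hn6 : 6 ≤ n := le_trans (le_max_left _ _) hn6'
    have hnD : 7*(d2+2*d1) ≤ n := le_trans (le_max_right _ _) hn6'
    have hn3 : 3 ≤ n := by omega
    have hsub : ((univ : Finset (Formula n (m n))).filter fun φ => Planted φ ∧
          ∃ x y : Fin n, x ≠ y ∧ kIsolated φ d1 x ∧ kIsolated φ d1 y ∧
            (primalGraph φ).Reachable x y ∧ (primalGraph φ).dist x y ≤ d2)
        ⊆ ((univ : Finset (Formula n (m n))).filter fun φ =>
            Planted φ ∧ ∃ ℓ ∈ Icc 1 d2, Bad n (m n) d1 ℓ φ) := by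
      intro φ hφ
      simp only [mem_filter, mem_univ, true_and] at hφ ⊢
      exact ⟨hφ.1, event_to_bad hφ.2⟩
    have h1 := card_le_card hsub
    have h2 := card_bad_le (n := n) (m := m n) d1 d2 hn3
    have hKpos : 0 < (PlC n).card := PlC_card_pos hn3
    have hKm : (0:ℝ) < ((PlC n).card:ℝ)^(m n) := by
      have : (0:ℝ) < ((PlC n).card:ℝ) := by exact_mod_cast hKpos
      positivity
    calc (((univ : Finset (Formula n (m n))).filter fun φ => Planted φ ∧
          ∃ x y : Fin n, x ≠ y ∧ kIsolated φ d1 x ∧ kIsolated φ d1 y ∧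
            (primalGraph φ).Reachable x y ∧ (primalGraph φ).dist x y ≤ d2).card : ℝ)
          / (((PlC n).card : ℝ))^(m n)
        ≤ ((∑ ℓ ∈ Icc 1 d2, ∑ a ∈ range (2*d1+1),
            n^(ℓ+1) * (m n)^ℓ * (m n)^a
              * ((72*n)^ℓ * (24*n^2)^a
                * ((PlC n).card - 6*((n-1)*(n-2)))^(m n-ℓ-a)) : ℕ) : ℝ)
            / (((PlC n).card : ℝ))^(m n) := by
          gcongr
          exact_mod_cast le_trans h1 h2
      _ ≤ ((d2 * (2*d1+1) * 21^d2 * 7^(2*d1) * 3 : ℝ)) * (n:ℝ)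
            * ((m n:ℝ)/(n:ℝ))^(d2+2*d1) * Real.exp (-(6/7) * ((m n:ℝ)/(n:ℝ))) := by
          rw [card_PlC]
          exact ratio_bound d1 d2 n (m n) hd1 hd2 hn6 hnD hnm
      _ = ((d2 * (2*d1+1) * 21^d2 * 7^(2*d1) * 3 : ℝ)) *
            ((n:ℝ) * ((m n:ℝ)/(n:ℝ))^(d2+2*d1)
              * Real.exp (-(6/7) * ((m n:ℝ)/(n:ℝ)))) := by ring
  have hr0 : Tendsto (fun n : ℕ =>
      (((univ : Finset (Formula n (m n))).filter fun φ => Planted φ ∧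
          ∃ x y : Fin n, x ≠ y ∧ kIsolated φ d1 x ∧ kIsolated φ d1 y ∧
            (primalGraph φ).Reachable x y ∧ (primalGraph φ).dist x y ≤ d2).card : ℝ)
          / (((PlC n).card : ℝ))^(m n)) atTop (𝓝 0) := by
    refine squeeze_zero' ?_ hb
      (bound_tendsto (d2 * (2*d1+1) * 21^d2 * 7^(2*d1) * 3 : ℝ) (d2+2*d1) κ hκ m hρ)
    filter_upwards with n
    positivity
  have hfinal : Tendsto (fun n : ℕ => 1 -
      (((univ : Finset (Formula n (m n))).filter fun φ => Planted φ ∧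
          ∃ x y : Fin n, x ≠ y ∧ kIsolated φ d1 x ∧ kIsolated φ d1 y ∧
            (primalGraph φ).Reachable x y ∧ (primalGraph φ).dist x y ≤ d2).card : ℝ)
          / (((PlC n).card : ℝ))^(m n)) atTop (𝓝 1) := by
    have := (tendsto_const_nhds (x := (1:ℝ)) (f := (atTop : Filter ℕ))).sub hr0
    simpa using this
  exact Tendsto.congr' (heq.mono fun n hn => hn.symm) hfinal
end

section
/- Let φ be a 3-CNF containing a crown with clauses c = (x1 ∨ x2 ∨ x3), c1 = (¬x1 ∨ x4 ∨ x5), c2 = (¬x2 ∨ x6 ∨ x7), c3 = (¬x3 ∨ x8 ∨ x9). Then any assignment u that assigns 0 to all of x1,…,x9 leaves the clause c unsatisfied, and no single flip of any of the variables x1,…,x9 strictly decreases the number of unsatisfied clauses of φ; consequently Local Search started from such an assignment never changes the values of x1,…,x9 and never satisfies c, even though the crown subformula is satisfiable. -/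
open Finset Filter
open scoped Classical Topology

/-- Clause `c` contains the literal on variable `x` with sign `b`. -/
def hasLit {n : ℕ} (c : Clause n) (x : Fin n) (b : Bool) : Prop := ∃ i, c.1 i = x ∧ c.2 i = b

/-- Clause `c` is (as a disjunction of literals) exactly the clause with the three
given literals: since the three variables of a clause are distinct, containing all
three literals means being equal to this clause. -/
def clauseIs {n : ℕ} (c : Clause n) (x1 : Fin n) (b1 : Bool) (x2 : Fin n) (b2 : Bool)
    (x3 : Fin n) (b3 : Bool) : Prop :=
  hasLit c x1 b1 ∧ hasLit c x2 b2 ∧ hasLit c x3 b3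


lemma fin3_cases : ∀ (i a b c : Fin 3), a ≠ b → a ≠ c → b ≠ c → i = a ∨ i = b ∨ i = c := by
  decide

lemma clauseIs_sat_iff {n : ℕ} {c : Clause n} {a b d : Fin n} {ba bb bd : Bool}
    (h : clauseIs c a ba b bb d bd) (hab : a ≠ b) (had : a ≠ d) (hbd : b ≠ d)
    (w : Assignment n) :
    clauseSat w c ↔ (w a = ba ∨ w b = bb ∨ w d = bd) := by
  obtain ⟨⟨ia, hia, hsa⟩, ⟨ib, hib, hsb⟩, ⟨ic, hic, hsc⟩⟩ := h
  constructor
  · rintro ⟨i, hi⟩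
    have h1 : ia ≠ ib := fun e => hab (by rw [← hia, ← hib, e])
    have h2 : ia ≠ ic := fun e => had (by rw [← hia, ← hic, e])
    have h3 : ib ≠ ic := fun e => hbd (by rw [← hib, ← hic, e])
    rcases fin3_cases i ia ib ic h1 h2 h3 with rfl | rfl | rfl
    · exact Or.inl (by rw [← hia, ← hsa]; exact hi)
    · exact Or.inr (Or.inl (by rw [← hib, ← hsb]; exact hi))
    · exact Or.inr (Or.inr (by rw [← hic, ← hsc]; exact hi))
  · rintro (h | h | h)
    · exact ⟨ia, show w (c.1 ia) = c.2 ia by rw [hia, hsa]; exact h⟩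
    · exact ⟨ib, show w (c.1 ib) = c.2 ib by rw [hib, hsb]; exact h⟩
    · exact ⟨ic, show w (c.1 ic) = c.2 ic by rw [hic, hsc]; exact h⟩

lemma clauseSat_flip_of_not_mem {n : ℕ} (u : Assignment n) (y : Fin n) (c : Clause n)
    (h : ∀ i, c.1 i ≠ y) : clauseSat (flipVar u y) c ↔ clauseSat u c := by
  constructor
  · rintro ⟨i, hi⟩
    refine ⟨i, ?_⟩
    have h2 : Function.update u y (!u y) (c.1 i) = c.2 i := hi
    rwa [Function.update_of_ne (h i)] at h2
  · rintro ⟨i, hi⟩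
    refine ⟨i, ?_⟩
    show Function.update u y (!u y) (c.1 i) = c.2 i
    rwa [Function.update_of_ne (h i)]

lemma card_filter_swap {α : Type*} [Fintype α] {p q : α → Prop}
    [DecidablePred p] [DecidablePred q]
    {a b : α} (hpa : p a) (hqa : ¬ q a) (hpb : ¬ p b) (hqb : q b)
    (h : ∀ c, c ≠ a → c ≠ b → (p c ↔ q c)) :
    (univ.filter fun c => q c).card = (univ.filter fun c => p c).card := by
  classical
  have hab : a ≠ b := fun e => hpb (e ▸ hpa)
  have hset : (univ.filter fun c => q c) = insert b ((univ.filter fun c => p c).erase a) := by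
    ext c
    simp only [mem_filter, mem_univ, true_and, mem_insert, mem_erase]
    by_cases hca : c = a
    · subst hca; simp [hqa, hab, Ne.symm hab]
    · by_cases hcb : c = b
      · subst hcb; simp [hqb, hpb]
      · simp [hca, hcb, h c hca hcb]
  have hmem : a ∈ univ.filter fun c => p c := by simp [hpa]
  have hnot : b ∉ (univ.filter fun c => p c).erase a := by simp [hpb]
  rw [hset, card_insert_of_notMem hnot, card_erase_of_mem hmem,
    Nat.sub_add_cancel (Finset.card_pos.mpr ⟨a, hmem⟩)]

lemma crown_main {n m : ℕ} (φ : Formula n m)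
    (x : Fin 9 → Fin n) (hinj : Function.Injective x)
    (j0 j1 j2 j3 : Fin m)
    (hc  : clauseIs (φ j0) (x 0) true (x 1) true (x 2) true)
    (hc1 : clauseIs (φ j1) (x 0) false (x 3) true (x 4) true)
    (hc2 : clauseIs (φ j2) (x 1) false (x 5) true (x 6) true)
    (hc3 : clauseIs (φ j3) (x 2) false (x 7) true (x 8) true)
    (honly : ∀ (j : Fin m) (i : Fin 3) (k : Fin 9),
        (φ j).1 i = x k → j = j0 ∨ j = j1 ∨ j = j2 ∨ j = j3)
    (u : Assignment n) (hu : ∀ k, u (x k) = false) :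
    (¬ clauseSat u (φ j0)) ∧
      ∀ k : Fin 9, numUnsat φ (flipVar u (x k)) = numUnsat φ u := by
  have hx : ∀ a b : Fin 9, a ≠ b → x a ≠ x b := fun a b hab e => hab (hinj e)
  have sat0 := fun w => clauseIs_sat_iff hc (hx 0 1 (by decide)) (hx 0 2 (by decide))
    (hx 1 2 (by decide)) w
  have sat1 := fun w => clauseIs_sat_iff hc1 (hx 0 3 (by decide)) (hx 0 4 (by decide))
    (hx 3 4 (by decide)) w
  have sat2 := fun w => clauseIs_sat_iff hc2 (hx 1 5 (by decide)) (hx 1 6 (by decide))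
    (hx 5 6 (by decide)) w
  have sat3 := fun w => clauseIs_sat_iff hc3 (hx 2 7 (by decide)) (hx 2 8 (by decide))
    (hx 7 8 (by decide)) w
  have h0 : ¬ clauseSat u (φ j0) := by rw [sat0]; simp [hu]
  refine ⟨h0, fun k => ?_⟩
  set v := flipVar u (x k) with hv
  have hvk : v (x k) = true := by
    rw [hv]; show Function.update u (x k) (!u (x k)) (x k) = true
    rw [Function.update_self, hu]
    rfl
  have hvne : ∀ a, a ≠ k → v (x a) = false := by
    intro a ha
    rw [hv]; show Function.update u (x k) (!u (x k)) (x a) = false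
    rw [Function.update_of_ne (hx a k ha)]; exact hu a
  have hunch : ∀ j, j ≠ j0 → j ≠ j1 → j ≠ j2 → j ≠ j3 →
      (clauseSat v (φ j) ↔ clauseSat u (φ j)) := by
    intro j a b c d
    rw [hv]
    apply clauseSat_flip_of_not_mem
    intro i e
    rcases honly j i k e with h | h | h | h
    exacts [a h, b h, c h, d h]
  show (univ.filter fun j => ¬ clauseSat v (φ j)).card
      = (univ.filter fun j => ¬ clauseSat u (φ j)).card
  by_cases hk0 : k = 0
  · subst hk0
    refine card_filter_swap (p := fun j => ¬ clauseSat u (φ j)) (q := fun j => ¬ clauseSat v (φ j)) (a := j0) (b := j1) h0 (not_not_intro ?_)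
      (not_not_intro ?_) ?_ ?_
    · rw [sat0]; exact Or.inl hvk
    · rw [sat1]; exact Or.inl (hu 0)
    · show ¬ clauseSat v (φ j1); rw [sat1]; simp [hvk, hvne 3 (by decide), hvne 4 (by decide)]
    · intro j hj0 hj1
      by_cases hj2 : j = j2
      · subst hj2
        exact iff_of_false (not_not_intro (by rw [sat2]; exact Or.inl (hu 1)))
          (not_not_intro (by rw [sat2]; exact Or.inl (hvne 1 (by decide))))
      · by_cases hj3 : j = j3
        · subst hj3
          exact iff_of_false (not_not_intro (by rw [sat3]; exact Or.inl (hu 2)))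
            (not_not_intro (by rw [sat3]; exact Or.inl (hvne 2 (by decide))))
        · exact not_congr (hunch j hj0 hj1 hj2 hj3).symm
  · by_cases hk1 : k = 1
    · subst hk1
      refine card_filter_swap (p := fun j => ¬ clauseSat u (φ j)) (q := fun j => ¬ clauseSat v (φ j)) (a := j0) (b := j2) h0 (not_not_intro ?_)
        (not_not_intro ?_) ?_ ?_
      · rw [sat0]; exact Or.inr (Or.inl hvk)
      · rw [sat2]; exact Or.inl (hu 1)
      · show ¬ clauseSat v (φ j2); rw [sat2]; simp [hvk, hvne 5 (by decide), hvne 6 (by decide)]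
      · intro j hj0 hj2
        by_cases hj1 : j = j1
        · subst hj1
          exact iff_of_false (not_not_intro (by rw [sat1]; exact Or.inl (hu 0)))
            (not_not_intro (by rw [sat1]; exact Or.inl (hvne 0 (by decide))))
        · by_cases hj3 : j = j3
          · subst hj3
            exact iff_of_false (not_not_intro (by rw [sat3]; exact Or.inl (hu 2)))
              (not_not_intro (by rw [sat3]; exact Or.inl (hvne 2 (by decide))))
          · exact not_congr (hunch j hj0 hj1 hj2 hj3).symm
    · by_cases hk2 : k = 2
      · subst hk2
        refine card_filter_swap (p := fun j => ¬ clauseSat u (φ j)) (q := fun j => ¬ clauseSat v (φ j)) (a := j0) (b := j3) h0 (not_not_intro ?_)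
          (not_not_intro ?_) ?_ ?_
        · rw [sat0]; exact Or.inr (Or.inr hvk)
        · rw [sat3]; exact Or.inl (hu 2)
        · show ¬ clauseSat v (φ j3); rw [sat3]; simp [hvk, hvne 7 (by decide), hvne 8 (by decide)]
        · intro j hj0 hj3
          by_cases hj1 : j = j1
          · subst hj1
            exact iff_of_false (not_not_intro (by rw [sat1]; exact Or.inl (hu 0)))
              (not_not_intro (by rw [sat1]; exact Or.inl (hvne 0 (by decide))))
          · by_cases hj2 : j = j2
            · subst hj2
              exact iff_of_false (not_not_intro (by rw [sat2]; exact Or.inl (hu 1)))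
                (not_not_intro (by rw [sat2]; exact Or.inl (hvne 1 (by decide))))
            · exact not_congr (hunch j hj0 hj1 hj2 hj3).symm
      · -- k ∉ {0,1,2}: nothing changes
        congr 1
        apply Finset.filter_congr
        intro j _
        apply not_congr
        by_cases hj0' : j = j0
        · subst hj0'
          rw [sat0, sat0]
          simp [hvne 0 (Ne.symm hk0), hvne 1 (Ne.symm hk1), hvne 2 (Ne.symm hk2), hu]
        · by_cases hj1' : j = j1
          · subst hj1'
            exact iff_of_true (by rw [sat1]; exact Or.inl (hvne 0 (Ne.symm hk0)))
              (by rw [sat1]; exact Or.inl (hu 0))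
          · by_cases hj2' : j = j2
            · subst hj2'
              exact iff_of_true (by rw [sat2]; exact Or.inl (hvne 1 (Ne.symm hk1)))
                (by rw [sat2]; exact Or.inl (hu 1))
            · by_cases hj3' : j = j3
              · subst hj3'
                exact iff_of_true (by rw [sat3]; exact Or.inl (hvne 2 (Ne.symm hk2)))
                  (by rw [sat3]; exact Or.inl (hu 2))
              · exact hunch j hj0' hj1' hj2' hj3'

/-- **Lemma (crowns block Local Search).**  Suppose `φ` contains a crown: clauses
`c = (x₁ ∨ x₂ ∨ x₃)`, `c₁ = (¬x₁ ∨ x₄ ∨ x₅)`, `c₂ = (¬x₂ ∨ x₆ ∨ x₇)`,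
`c₃ = (¬x₃ ∨ x₈ ∨ x₉)` on nine distinct variables that appear in no other clause of
`φ`.  (Here `x k` for `k : Fin 9` denotes `x_{k+1}`, and `j0, j1, j2, j3` are the
positions of `c, c₁, c₂, c₃`.)  Then for every assignment `u` assigning `0` to all of
`x₁, …, x₉`: the clause `c` is unsatisfied; no flip of one of `x₁, …, x₉` strictly
decreases the number of unsatisfied clauses; consequently along any sequence of
strictly improving flips (in particular, along any run of Local Search) the values of
`x₁, …, x₉` stay `0` and `c` stays unsatisfied — even though the crown subformula is
satisfiable. -/
theorem crown_blocks_local_search {n m : ℕ} (φ : Formula n m)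
    (x : Fin 9 → Fin n) (hinj : Function.Injective x)
    (j0 j1 j2 j3 : Fin m)
    (hc  : clauseIs (φ j0) (x 0) true (x 1) true (x 2) true)
    (hc1 : clauseIs (φ j1) (x 0) false (x 3) true (x 4) true)
    (hc2 : clauseIs (φ j2) (x 1) false (x 5) true (x 6) true)
    (hc3 : clauseIs (φ j3) (x 2) false (x 7) true (x 8) true)
    (honly : ∀ (j : Fin m) (i : Fin 3) (k : Fin 9),
        (φ j).1 i = x k → j = j0 ∨ j = j1 ∨ j = j2 ∨ j = j3)
    (u : Assignment n) (hu : ∀ k, u (x k) = false) :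
    (¬ clauseSat u (φ j0)) ∧
    (∀ k : Fin 9, ¬ (numUnsat φ (flipVar u (x k)) < numUnsat φ u)) ∧
    (∀ v : Assignment n,
        Relation.ReflTransGen
          (fun a b => ∃ i : Fin n, numUnsat φ b < numUnsat φ a ∧ b = flipVar a i) u v →
        (∀ k, v (x k) = false) ∧ ¬ clauseSat v (φ j0)) ∧
    (∃ w : Assignment n, clauseSat w (φ j0) ∧ clauseSat w (φ j1) ∧
        clauseSat w (φ j2) ∧ clauseSat w (φ j3)) := by
  have main := fun (w : Assignment n) (hw : ∀ k, w (x k) = false) =>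
    crown_main φ x hinj j0 j1 j2 j3 hc hc1 hc2 hc3 honly w hw
  have allt : ∀ (c : Clause n) (y : Fin n), hasLit c y true →
      clauseSat (fun _ => true) c := by
    rintro c y ⟨i, -, h⟩
    exact ⟨i, h.symm⟩
  refine ⟨(main u hu).1, ?_, ?_, fun _ => true, allt _ _ hc.1, allt _ _ hc1.2.1,
    allt _ _ hc2.2.1, allt _ _ hc3.2.1⟩
  · intro k hlt
    rw [(main u hu).2 k] at hlt
    exact lt_irrefl _ hlt
  · intro v hrel
    have hz : ∀ k, v (x k) = false := by
      induction hrel with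
      | refl => exact hu
      | @tail b c h1 h2 ih =>
        obtain ⟨i, hlt, rfl⟩ := h2
        intro k
        have hne : i ≠ x k := by
          rintro rfl
          rw [(main _ ih).2 k] at hlt
          exact lt_irrefl _ hlt
        show Function.update b i (!(b i)) (x k) = false
        rw [Function.update_of_ne (Ne.symm hne)]
        exact ih k
    exact ⟨hz, (main v hz).1⟩
end

section
/- Let (D_0, D_1, …, D_l) be an integer-valued random process, d > 0 a real, and L, H integer constants such that: (a) D_0 = 0 and 0 < L < H; (b) |D_{τ+1} − D_τ| = 1 for all τ; (c) whenever L ≤ D_τ ≤ H, the conditional expectation satisfies E[D_{τ+1} | D_τ] < D_τ − d. Then the probability that there exists τ ≤ l with D_τ > H is less than l·e^{−d(H−L)/2}. -/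
open MeasureTheory Filter

private lemma exp_drift_ineq (d : ℝ) : (1 - d) * Real.exp d + (1 + d) * Real.exp (-d) ≤ 2 := by
  have h1 := Real.add_one_le_exp (-d)
  have h2 := Real.add_one_le_exp d
  have e1 : (0:ℝ) < Real.exp d := Real.exp_pos d
  have e2 : (0:ℝ) < Real.exp (-d) := Real.exp_pos _
  have h3 : Real.exp (-d) * Real.exp d = 1 := by
    rw [← Real.exp_add]; simp
  nlinarith [mul_le_mul_of_nonneg_right h1 e1.le, mul_le_mul_of_nonneg_right h2 e2.le]

private lemma final_exp_ineq (d : ℝ) (hd : 0 < d) :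
    Real.exp (-(5*d/2)) + (Real.exp (-d) - Real.exp (-(2*d))) < 1 := by
  set x : ℝ := Real.exp (-(d/2)) with hx
  have hx0 : 0 < x := Real.exp_pos _
  have hx1 : x < 1 := Real.exp_lt_one_iff.mpr (by linarith)
  have e5 : Real.exp (-(5*d/2)) = x^5 := by
    rw [hx, ← Real.exp_nat_mul]; congr 1; push_cast; ring
  have e2 : Real.exp (-d) = x^2 := by
    rw [hx, ← Real.exp_nat_mul]; congr 1; push_cast; ring
  have e4 : Real.exp (-(2*d)) = x^4 := by
    rw [hx, ← Real.exp_nat_mul]; congr 1; push_cast; ring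
  rw [e5, e2, e4]
  nlinarith [mul_pos (sub_pos.2 hx1) (show (0:ℝ) < 1 + x + x^4 by positivity)]

/-- **Lemma (escaping a strip with drift).**  Let `(D_0, …, D_l)` be an integer random
process, `d > 0`, and `L, H` integer constants with `D_0 = 0`, `0 < L < H`, whose
increments have absolute value `1`, and such that whenever `L ≤ D_τ ≤ H` the drift
condition `E[D_{τ+1} | D_τ] < D_τ − d` holds.  Then the probability that `D_τ > H` for
some `τ ≤ l` is less than `l · exp(−d(H−L)/2)`. -/
theorem strip_crossing_bound {Ω : Type*} {mΩ : MeasurableSpace Ω}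
    (μ : Measure Ω) [IsProbabilityMeasure μ]
    (l : ℕ) (hl : 1 ≤ l) (D : ℕ → Ω → ℤ) (hD : ∀ τ, Measurable (D τ))
    (d : ℝ) (hd : 0 < d) (L H : ℤ) (hL : 0 < L) (hLH : L < H)
    (h0 : ∀ ω, D 0 ω = 0)
    (hstep : ∀ τ < l, ∀ ω, |D (τ + 1) ω - D τ ω| = 1)
    (hdrift : ∀ τ < l, ∀ᵐ ω ∂μ, L ≤ D τ ω → D τ ω ≤ H →
        (μ[fun ω' => ((D (τ + 1) ω' : ℤ) : ℝ) | MeasurableSpace.comap (D τ) ⊤]) ω <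
          (D τ ω : ℝ) - d) :
    μ {ω | ∃ τ ≤ l, H < D τ ω} <
      ENNReal.ofReal (l * Real.exp (-(d * ((H : ℝ) - (L : ℝ)) / 2))) := by
  classical
  -- the potential function
  set f : ℤ → ℝ := fun k => Real.exp (d * ((min k (H+1) : ℤ) : ℝ)) with hf_def
  have hf_pos : ∀ k, 0 < f k := fun k => Real.exp_pos _
  have hf_mono : ∀ {j k : ℤ}, j ≤ k → f j ≤ f k := by
    intro j k hjk
    apply Real.exp_le_exp.2
    apply mul_le_mul_of_nonneg_left _ hd.le
    exact_mod_cast min_le_min hjk le_rfl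
  have hf_top : ∀ k, f k ≤ Real.exp (d * ((H:ℝ)+1)) := by
    intro k
    apply Real.exp_le_exp.2
    apply mul_le_mul_of_nonneg_left _ hd.le
    have : (min k (H+1) : ℤ) ≤ H + 1 := min_le_right _ _
    push_cast
    exact_mod_cast this
  have hf_eq : ∀ k : ℤ, k ≤ H + 1 → f k = Real.exp (d * (k:ℝ)) := by
    intro k hk
    simp only [hf_def]
    rw [min_eq_left hk]
  -- increments are ±1
  have hpm : ∀ τ < l, ∀ ω, D (τ+1) ω = D τ ω + 1 ∨ D (τ+1) ω = D τ ω - 1 := by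
    intro τ hτ ω
    have h := hstep τ hτ ω
    rcases (abs_eq (by norm_num : (0:ℤ) ≤ 1)).mp h with h' | h'
    · left; omega
    · right; omega
  -- range bound
  have hrange : ∀ τ, τ ≤ l → ∀ ω, |D τ ω| ≤ (τ:ℤ) := by
    intro τ
    induction τ with
    | zero => intro _ ω; simp [h0]
    | succ n ih =>
      intro h ω
      have h1 := hpm n (by omega) ω
      have h2 := ih (by omega) ω
      rw [abs_le] at h2 ⊢
      push_cast
      omega
  -- measurability and integrability
  have hmeasf : ∀ τ, Measurable (fun ω => f (D τ ω)) :=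
    fun τ => (measurable_from_top : Measurable f).comp (hD τ)
  have hintf : ∀ τ, Integrable (fun ω => f (D τ ω)) μ := by
    intro τ
    refine (integrable_const (Real.exp (d * ((H:ℝ)+1)))).mono'
      (hmeasf τ).aestronglyMeasurable (ae_of_all _ fun ω => ?_)
    rw [Real.norm_eq_abs, abs_of_pos (hf_pos _)]
    exact hf_top _
  have hintD : ∀ τ, τ ≤ l → Integrable (fun ω => ((D τ ω : ℤ) : ℝ)) μ := by
    intro τ hτ
    refine (integrable_const ((l:ℝ))).mono'
      (((measurable_from_top : Measurable (fun k : ℤ => (k:ℝ))).comp (hD τ)).aestronglyMeasurable)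
      (ae_of_all _ fun ω => ?_)
    rw [Real.norm_eq_abs]
    have := hrange τ hτ ω
    rw [← Int.cast_abs]
    have h2 : ((|D τ ω| : ℤ) : ℝ) ≤ ((τ:ℤ):ℝ) := by exact_mod_cast this
    have h3 : ((τ:ℤ):ℝ) ≤ (l:ℝ) := by exact_mod_cast hτ
    linarith
  -- partition of the space according to the value of `D τ`
  set I : Finset ℤ := Finset.Icc (-(l:ℤ)) (l:ℤ) with hI_def
  have hpart : ∀ τ, τ ≤ l → ∀ (g : Ω → ℝ), Integrable g μ →
      ∫ ω, g ω ∂μ = ∑ k ∈ I, ∫ ω in D τ ⁻¹' {k}, g ω ∂μ := by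
    intro τ hτ g hg
    have hcover : (⋃ k ∈ I, D τ ⁻¹' {k}) = Set.univ := by
      ext ω
      simp only [Set.mem_iUnion, Set.mem_preimage, Set.mem_singleton_iff, Set.mem_univ,
        iff_true, hI_def, Finset.mem_Icc]
      refine ⟨D τ ω, ?_, rfl⟩
      have := hrange τ hτ ω
      rw [abs_le] at this
      omega
    have : ∫ ω, g ω ∂μ = ∫ ω in ⋃ k ∈ I, D τ ⁻¹' {k}, g ω ∂μ := by
      rw [hcover, Measure.restrict_univ]
    rw [this]
    refine integral_biUnion_finset I (fun k _ => hD τ (measurableSet_singleton k)) ?_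
      (fun k _ => hg.integrableOn)
    intro i _ j _ hij
    simp only [Function.onFun, Set.disjoint_left]
    intro ω h1 h2
    simp only [Set.mem_preimage, Set.mem_singleton_iff] at h1 h2
    exact hij (h1 ▸ h2 ▸ rfl)
  have hsum1 : ∀ τ, τ ≤ l → ∑ k ∈ I, (μ (D τ ⁻¹' {k})).toReal = 1 := by
    intro τ hτ
    have := hpart τ hτ (fun _ => (1:ℝ)) (integrable_const 1)
    simp only [setIntegral_const, smul_eq_mul, mul_one, integral_const, measure_univ,
      ENNReal.toReal_one, one_smul, Measure.restrict_apply_univ, probReal_univ,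
      measureReal_restrict_apply_univ, Measure.real] at this
    linarith [this]
  -- the per-step leak constant
  set c : ℝ := Real.exp (d * ((L:ℝ) - 1)) * (Real.exp d - 1) with hc_def
  have hc0 : 0 ≤ c := by
    apply mul_nonneg (Real.exp_pos _).le
    have := Real.add_one_le_exp d
    linarith
  -- the key one-step estimate
  have hkey : ∀ τ < l, ∀ k : ℤ,
      ∫ ω in D τ ⁻¹' {k}, f (D (τ+1) ω) ∂μ ≤ (f k + c) * (μ (D τ ⁻¹' {k})).toReal := by
    intro τ hτ k
    set S : Set Ω := D τ ⁻¹' {k} with hS_def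
    have hSm : MeasurableSet S := hD τ (measurableSet_singleton k)
    by_cases hk1 : k < L
    · -- below the strip: pointwise estimate f(D_{τ+1}) ≤ f k + c
      have hpt : ∀ ω ∈ S, f (D (τ+1) ω) ≤ f k + c := by
        intro ω hω
        have hωk : D τ ω = k := hω
        rcases hpm τ hτ ω with h | h
        · rw [h, hωk]
          have e1 : f (k+1) = Real.exp (d * ((k:ℝ)+1)) := by
            rw [hf_eq (k+1) (by omega)]; push_cast; ring_nf
          have e2 : f k = Real.exp (d * (k:ℝ)) := hf_eq k (by omega)
          rw [e1, e2]
          have e3 : Real.exp (d * ((k:ℝ)+1)) = Real.exp (d * (k:ℝ)) * Real.exp d := by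
            rw [← Real.exp_add]; ring_nf
          have e4 : Real.exp (d * (k:ℝ)) ≤ Real.exp (d * ((L:ℝ)-1)) := by
            apply Real.exp_le_exp.2
            apply mul_le_mul_of_nonneg_left _ hd.le
            have hk' : ((k:ℤ):ℝ) ≤ ((L - 1 : ℤ):ℝ) := by
              exact_mod_cast (show k ≤ L - 1 by omega)
            push_cast at hk'
            linarith
          rw [e3, hc_def]
          have h1 : (1:ℝ) ≤ Real.exp d := by
            have := Real.add_one_le_exp d; linarith
          nlinarith [Real.exp_pos (d * (k:ℝ))]
        · rw [h, hωk]
          have := hf_mono (show k - 1 ≤ k by omega)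
          linarith
      calc ∫ ω in S, f (D (τ+1) ω) ∂μ ≤ ∫ _ω in S, (f k + c) ∂μ := by
            refine integral_mono_ae ((hintf (τ+1)).integrableOn) (integrable_const _) ?_
            filter_upwards [ae_restrict_mem hSm] with ω hω
            exact hpt ω hω
        _ = (f k + c) * (μ S).toReal := by rw [setIntegral_const, smul_eq_mul, measureReal_def]; ring
    · by_cases hk2 : H < k
      · -- above the strip: pointwise f(D_{τ+1}) ≤ f k
        have hpt : ∀ ω ∈ S, f (D (τ+1) ω) ≤ f k := by
          intro ω hω
          have hωk : D τ ω = k := hω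
          rcases hpm τ hτ ω with h | h
          · rw [h, hωk]
            simp only [hf_def]
            apply Real.exp_le_exp.2
            apply mul_le_mul_of_nonneg_left _ hd.le
            have h1 : min (k+1) (H+1) = H + 1 := min_eq_right (by omega)
            have h2 : min k (H+1) = H + 1 := min_eq_right (by omega)
            rw [h1, h2]
          · rw [h, hωk]
            exact hf_mono (by omega)
        calc ∫ ω in S, f (D (τ+1) ω) ∂μ ≤ ∫ _ω in S, f k ∂μ := by
              refine integral_mono_ae ((hintf (τ+1)).integrableOn) (integrable_const _) ?_
              filter_upwards [ae_restrict_mem hSm] with ω hω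
              exact hpt ω hω
          _ = f k * (μ S).toReal := by rw [setIntegral_const, smul_eq_mul, measureReal_def]; ring
          _ ≤ (f k + c) * (μ S).toReal := by
              apply mul_le_mul_of_nonneg_right _ ENNReal.toReal_nonneg
              linarith
      · -- inside the strip: use the drift
        push_neg at hk1 hk2
        set a : ℝ := (f (k+1) + f (k-1))/2 with ha_def
        set b : ℝ := (f (k+1) - f (k-1))/2 with hb_def
        have hb0 : 0 ≤ b := by
          have := hf_mono (show k - 1 ≤ k + 1 by omega)
          rw [hb_def]; linarith
        -- conditional expectation bound on S
        have hmle : MeasurableSpace.comap (D τ) ⊤ ≤ mΩ := (hD τ).comap_le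
        haveI : IsFiniteMeasure (μ.trim hmle) := isFiniteMeasure_trim hmle
        have hScm : MeasurableSet[MeasurableSpace.comap (D τ) ⊤] S := ⟨{k}, trivial, rfl⟩
        have hintD1 : Integrable (fun ω => ((D (τ+1) ω : ℤ) : ℝ)) μ := hintD (τ+1) (by omega)
        have hcondb : ∫ ω in S, ((D (τ+1) ω : ℤ) : ℝ) ∂μ ≤ ((k:ℝ) - d) * (μ S).toReal := by
          rw [← setIntegral_condExp hmle hintD1 hScm]
          calc ∫ ω in S, (μ[fun ω' => ((D (τ + 1) ω' : ℤ) : ℝ) |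
                MeasurableSpace.comap (D τ) ⊤]) ω ∂μ
              ≤ ∫ _ω in S, ((k:ℝ) - d) ∂μ := by
                refine integral_mono_ae (integrable_condExp.integrableOn) (integrable_const _) ?_
                filter_upwards [ae_restrict_mem hSm, ae_restrict_of_ae (hdrift τ hτ)] with ω h1 h2
                have hωk : D τ ω = k := h1
                have := h2 (by rw [hωk]; exact hk1) (by rw [hωk]; exact hk2)
                rw [hωk] at this
                linarith
            _ = ((k:ℝ) - d) * (μ S).toReal := by rw [setIntegral_const, smul_eq_mul, measureReal_def]; ring
        -- pointwise identity on S
        have hpt : ∀ ω ∈ S, f (D (τ+1) ω) = (a - b * (k:ℝ)) + b * ((D (τ+1) ω : ℤ) : ℝ) := by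
          intro ω hω
          have hωk : D τ ω = k := hω
          rcases hpm τ hτ ω with h | h
          · rw [h, hωk]
            have : ((k + 1 : ℤ) : ℝ) = (k:ℝ) + 1 := by push_cast; ring
            rw [this, ha_def, hb_def]; ring
          · rw [h, hωk]
            have : ((k - 1 : ℤ) : ℝ) = (k:ℝ) - 1 := by push_cast; ring
            rw [this, ha_def, hb_def]; ring
        have hIntEq : ∫ ω in S, f (D (τ+1) ω) ∂μ
            = (a - b * (k:ℝ)) * (μ S).toReal + b * ∫ ω in S, ((D (τ+1) ω : ℤ) : ℝ) ∂μ := by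
          rw [setIntegral_congr_fun hSm hpt]
          rw [integral_add (integrable_const _) ((hintD1.integrableOn).const_mul b)]
          rw [setIntegral_const, integral_const_mul, smul_eq_mul, measureReal_def]
          ring
        -- the supermartingale inequality: a - d * b ≤ f k
        have hsuper : a - d * b ≤ f k := by
          have e1 : f (k+1) = Real.exp (d * (k:ℝ)) * Real.exp d := by
            rw [hf_eq (k+1) (by omega), ← Real.exp_add]
            congr 1; push_cast; ring
          have e2 : f (k-1) = Real.exp (d * (k:ℝ)) * Real.exp (-d) := by
            rw [hf_eq (k-1) (by omega), ← Real.exp_add]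
            congr 1; push_cast; ring
          have e3 : f k = Real.exp (d * (k:ℝ)) := hf_eq k (by omega)
          rw [ha_def, hb_def, e1, e2, e3]
          nlinarith [mul_le_mul_of_nonneg_left (exp_drift_ineq d) (Real.exp_pos (d * (k:ℝ))).le]
        calc ∫ ω in S, f (D (τ+1) ω) ∂μ
            = (a - b * (k:ℝ)) * (μ S).toReal + b * ∫ ω in S, ((D (τ+1) ω : ℤ) : ℝ) ∂μ := hIntEq
          _ ≤ (a - b * (k:ℝ)) * (μ S).toReal + b * (((k:ℝ) - d) * (μ S).toReal) := by
              have := mul_le_mul_of_nonneg_left hcondb hb0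
              linarith
          _ = (a - d * b) * (μ S).toReal := by ring
          _ ≤ (f k + c) * (μ S).toReal := by
              apply mul_le_mul_of_nonneg_right _ ENNReal.toReal_nonneg
              linarith
  -- one-step inequality for the expectation of the potential
  have hstepI : ∀ τ < l, ∫ ω, f (D (τ+1) ω) ∂μ ≤ ∫ ω, f (D τ ω) ∂μ + c := by
    intro τ hτ
    rw [hpart τ (le_of_lt hτ) _ (hintf (τ+1)), hpart τ (le_of_lt hτ) _ (hintf τ)]
    have h1 : ∀ k ∈ I, ∫ ω in D τ ⁻¹' {k}, f (D τ ω) ∂μ = f k * (μ (D τ ⁻¹' {k})).toReal := by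
      intro k _
      have : ∀ ω ∈ D τ ⁻¹' {k}, f (D τ ω) = f k := by
        intro ω hω; rw [show D τ ω = k from hω]
      rw [setIntegral_congr_fun (hD τ (measurableSet_singleton k)) this, setIntegral_const,
        smul_eq_mul, mul_comm, measureReal_def]
    calc ∑ k ∈ I, ∫ ω in D τ ⁻¹' {k}, f (D (τ+1) ω) ∂μ
        ≤ ∑ k ∈ I, (f k + c) * (μ (D τ ⁻¹' {k})).toReal :=
          Finset.sum_le_sum fun k _ => hkey τ hτ k
      _ = ∑ k ∈ I, f k * (μ (D τ ⁻¹' {k})).toReal + c * ∑ k ∈ I, (μ (D τ ⁻¹' {k})).toReal := by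
          rw [Finset.mul_sum, ← Finset.sum_add_distrib]
          congr 1; ext k; ring
      _ = ∑ k ∈ I, f k * (μ (D τ ⁻¹' {k})).toReal + c := by
          rw [hsum1 τ (le_of_lt hτ), mul_one]
      _ = ∑ k ∈ I, ∫ ω in D τ ⁻¹' {k}, f (D τ ω) ∂μ + c := by
          congr 1
          exact (Finset.sum_congr rfl h1).symm
  -- the potential stays bounded
  have hphi : ∀ b ≤ l, ∫ ω, f (D b ω) ∂μ ≤ 1 + (b:ℝ) * c := by
    intro b
    induction b with
    | zero =>
      intro _
      have : (fun ω => f (D 0 ω)) = fun _ => f 0 := by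
        ext ω; rw [h0 ω]
      rw [this, integral_const, probReal_univ, one_smul]
      have : f 0 = 1 := by
        rw [hf_eq 0 (by omega)]
        simp
      rw [this]; simp
    | succ n ih =>
      intro h
      have h1 := hstepI n (by omega)
      have h2 := ih (by omega)
      push_cast
      linarith
  -- Markov bound at each time
  have hmark : ∀ b ≤ l, (μ {ω | H < D b ω}).toReal
      ≤ (1 + (l:ℝ) * c) * Real.exp (-(d * ((H:ℝ)+1))) := by
    intro b hb
    set S' : Set Ω := {ω | H < D b ω} with hS'_def
    have hS'm : MeasurableSet S' := hD b (by trivial : MeasurableSet {k : ℤ | H < k})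
    have h1 : Real.exp (d * ((H:ℝ)+1)) * (μ S').toReal ≤ ∫ ω, f (D b ω) ∂μ := by
      calc Real.exp (d * ((H:ℝ)+1)) * (μ S').toReal
          = ∫ _ω in S', Real.exp (d * ((H:ℝ)+1)) ∂μ := by
            rw [setIntegral_const, smul_eq_mul, measureReal_def]; ring
        _ ≤ ∫ ω in S', f (D b ω) ∂μ := by
            refine integral_mono_ae (integrable_const _) ((hintf b).integrableOn) ?_
            filter_upwards [ae_restrict_mem hS'm] with ω hω
            have hω' : H < D b ω := hω
            have hmin : (min (D b ω) (H+1) : ℤ) = H + 1 := min_eq_right (by omega)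
            simp only [hf_def, hmin]
            apply le_of_eq
            congr 1
            push_cast
            ring
        _ ≤ ∫ ω, f (D b ω) ∂μ :=
            setIntegral_le_integral (hintf b) (ae_of_all _ fun ω => (hf_pos _).le)
    have h2 : ∫ ω, f (D b ω) ∂μ ≤ 1 + (l:ℝ) * c := by
      have := hphi b hb
      have hcb : (b:ℝ) * c ≤ (l:ℝ) * c := by
        apply mul_le_mul_of_nonneg_right _ hc0
        exact_mod_cast hb
      linarith
    have hE : 0 < Real.exp (d * ((H:ℝ)+1)) := Real.exp_pos _
    have h3 : (μ S').toReal ≤ (1 + (l:ℝ) * c) / Real.exp (d * ((H:ℝ)+1)) := by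
      rw [le_div_iff₀ hE]
      nlinarith [h1, h2]
    calc (μ S').toReal ≤ (1 + (l:ℝ) * c) / Real.exp (d * ((H:ℝ)+1)) := h3
      _ = (1 + (l:ℝ) * c) * Real.exp (-(d * ((H:ℝ)+1))) := by
          rw [Real.exp_neg, div_eq_mul_inv]
  -- union bound
  set B : ℝ := (l:ℝ) * ((1 + (l:ℝ) * c) * Real.exp (-(d * ((H:ℝ)+1)))) with hB_def
  have hμev : μ {ω | ∃ τ ≤ l, H < D τ ω} ≤ ENNReal.ofReal B := by
    have hsub : {ω | ∃ τ ≤ l, H < D τ ω} ⊆ ⋃ b ∈ Finset.Icc 1 l, {ω | H < D b ω} := by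
      intro ω hω
      obtain ⟨τ, hτ, hH⟩ := hω
      have hτ0 : τ ≠ 0 := by
        intro h; rw [h, h0] at hH; omega
      exact Set.mem_biUnion (Finset.mem_Icc.2 ⟨by omega, hτ⟩) hH
    have hcard : (Finset.Icc 1 l).card = l := by rw [Nat.card_Icc]; omega
    have hM0 : 0 ≤ (1 + (l:ℝ) * c) * Real.exp (-(d * ((H:ℝ)+1))) := by
      apply mul_nonneg _ (Real.exp_pos _).le
      have : (0:ℝ) ≤ (l:ℝ) * c := mul_nonneg (by positivity) hc0
      linarith
    calc μ {ω | ∃ τ ≤ l, H < D τ ω} ≤ μ (⋃ b ∈ Finset.Icc 1 l, {ω | H < D b ω}) :=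
          measure_mono hsub
      _ ≤ ∑ b ∈ Finset.Icc 1 l, μ {ω | H < D b ω} := measure_biUnion_finset_le _ _
      _ ≤ ∑ _b ∈ Finset.Icc 1 l,
            ENNReal.ofReal ((1 + (l:ℝ) * c) * Real.exp (-(d * ((H:ℝ)+1)))) := by
          refine Finset.sum_le_sum fun b hb => ?_
          have hb' := (Finset.mem_Icc.1 hb).2
          have := hmark b hb'
          calc μ {ω | H < D b ω} = ENNReal.ofReal (μ {ω | H < D b ω}).toReal :=
                (ENNReal.ofReal_toReal (measure_ne_top μ _)).symm
            _ ≤ _ := ENNReal.ofReal_le_ofReal this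
      _ = ENNReal.ofReal B := by
          rw [Finset.sum_const, hcard, nsmul_eq_mul, hB_def,
            ← ENNReal.ofReal_natCast l, ← ENNReal.ofReal_mul (by positivity)]
  -- final arithmetic
  set E1 : ℝ := Real.exp (-(d * ((H : ℝ) - (L : ℝ)) / 2)) with hE1_def
  have hE1pos : 0 < E1 := Real.exp_pos _
  by_cases hcase : (l:ℝ) * E1 ≤ 1
  · -- then l ≤ exp(d(H-L)/2) and we can compare B with l * E1
    have hlle : (l:ℝ) ≤ Real.exp (d * ((H:ℝ) - (L:ℝ)) / 2) := by
      have h1 : E1 * Real.exp (d * ((H:ℝ) - (L:ℝ)) / 2) = 1 := by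
        rw [hE1_def, ← Real.exp_add]; simp
      nlinarith [Real.exp_pos (d * ((H:ℝ) - (L:ℝ)) / 2)]
    have hHL2 : (2:ℤ) ≤ H := by omega
    have hkey2 : (1 + (l:ℝ) * c) * Real.exp (-(d * ((H:ℝ)+1))) < E1 := by
      have t1 : Real.exp (-(d * ((H:ℝ)+1))) ≤ E1 * Real.exp (-(5*d/2)) := by
        have e1 : Real.exp (-(d * ((H:ℝ)+1)))
            = E1 * Real.exp (-(d * ((H:ℝ) + (L:ℝ) + 2) / 2)) := by
          rw [hE1_def, ← Real.exp_add]; congr 1; ring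
        rw [e1]
        apply mul_le_mul_of_nonneg_left _ hE1pos.le
        apply Real.exp_le_exp.2
        have hHL : (3:ℝ) ≤ (H:ℝ) + (L:ℝ) := by
          have : (3:ℤ) ≤ H + L := by omega
          exact_mod_cast this
        nlinarith
      have t2 : (l:ℝ) * c * Real.exp (-(d * ((H:ℝ)+1)))
          ≤ E1 * (Real.exp (-d) - Real.exp (-(2*d))) := by
        have e2 : Real.exp (d * ((H:ℝ) - (L:ℝ)) / 2) * c * Real.exp (-(d * ((H:ℝ)+1)))
            = E1 * (Real.exp (-d) - Real.exp (-(2*d))) := by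
          rw [hc_def, hE1_def]
          have q1 : Real.exp (d * ((H:ℝ) - (L:ℝ)) / 2) * (Real.exp (d * ((L:ℝ) - 1))
              * (Real.exp d - 1)) * Real.exp (-(d * ((H:ℝ)+1)))
              = Real.exp (d * ((H:ℝ) - (L:ℝ)) / 2 + d * ((L:ℝ) - 1) + -(d * ((H:ℝ)+1)))
                * (Real.exp d - 1) := by
            rw [Real.exp_add, Real.exp_add]; ring
          rw [q1]
          have q2 : d * ((H:ℝ) - (L:ℝ)) / 2 + d * ((L:ℝ) - 1) + -(d * ((H:ℝ)+1))
              = -(d * ((H : ℝ) - (L : ℝ)) / 2) + -(2*d) := by ring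
          rw [q2, Real.exp_add]
          have q3 : Real.exp (-(2*d)) * (Real.exp d - 1)
              = Real.exp (-d) - Real.exp (-(2*d)) := by
            have : Real.exp (-(2*d)) * Real.exp d = Real.exp (-d) := by
              rw [← Real.exp_add]; congr 1; ring
            nlinarith [this]
          rw [mul_assoc, q3]
        calc (l:ℝ) * c * Real.exp (-(d * ((H:ℝ)+1)))
            ≤ Real.exp (d * ((H:ℝ) - (L:ℝ)) / 2) * c * Real.exp (-(d * ((H:ℝ)+1))) := by
              apply mul_le_mul_of_nonneg_right _ (Real.exp_pos _).le
              exact mul_le_mul_of_nonneg_right hlle hc0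
          _ = E1 * (Real.exp (-d) - Real.exp (-(2*d))) := e2
      have hfin := final_exp_ineq d hd
      calc (1 + (l:ℝ) * c) * Real.exp (-(d * ((H:ℝ)+1)))
          = Real.exp (-(d * ((H:ℝ)+1))) + (l:ℝ) * c * Real.exp (-(d * ((H:ℝ)+1))) := by ring
        _ ≤ E1 * Real.exp (-(5*d/2)) + E1 * (Real.exp (-d) - Real.exp (-(2*d))) := by
            linarith
        _ = E1 * (Real.exp (-(5*d/2)) + (Real.exp (-d) - Real.exp (-(2*d)))) := by ring
        _ < E1 * 1 := by
            exact mul_lt_mul_of_pos_left hfin hE1pos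
        _ = E1 := mul_one E1
    have hBlt : B < (l:ℝ) * E1 := by
      rw [hB_def]
      apply mul_lt_mul_of_pos_left hkey2
      have : (0:ℝ) < (l:ℝ) := by exact_mod_cast hl
      exact this
    calc μ {ω | ∃ τ ≤ l, H < D τ ω} ≤ ENNReal.ofReal B := hμev
      _ < ENNReal.ofReal ((l:ℝ) * E1) := (ENNReal.ofReal_lt_ofReal_iff
          (by positivity)).2 hBlt
  · -- the bound exceeds 1, so the claim follows from μ being a probability measure
    push_neg at hcase
    calc μ {ω | ∃ τ ≤ l, H < D τ ω} ≤ 1 := prob_le_one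
      _ = ENNReal.ofReal 1 := ENNReal.ofReal_one.symm
      _ < ENNReal.ofReal ((l:ℝ) * E1) := (ENNReal.ofReal_lt_ofReal_iff
          (by positivity)).2 hcase
end
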